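/- arXiv:2008.10564 — 3 statements merged into one kernel-verified Lean document; each statement's English description precedes it below -/
import Mathlib

section
/- Let d ≥ 2 be an integer, p > 0, and let E ⊆ C_p^d be a set such that for each i ∈ ℕ the intersection of E with the sphere of radius i^{-p} centred at the origin is a finite set of cardinality b_i. If liminf_{n→∞} #{1 ≤ i ≤ n : b_i > 0}/n > 0, then lodim_θ(E) ≥ θ/(p+θ) for all θ ∈ (0,1]; and if limsup_{n→∞} #{1 ≤ i ≤ n : b_i > 0}/n > 0, then updim_θ(E) ≥ θ/(p+θ) for all θ ∈ (0,1]. -/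
open Set Metric Filter

/-- The upper θ-intermediate dimension of a set `E` in a metric space:
the infimum of all `s ≥ 0` such that for every `ε > 0` there is `δ₀ > 0` such that for all
`0 < δ < δ₀` there is a countable cover `𝒰` of `E` with `δ ≤ diam U ≤ δ ^ θ` for all `U ∈ 𝒰`
and `∑_{U ∈ 𝒰} (diam U) ^ s ≤ ε`. -/
noncomputable def updim {X : Type*} [PseudoMetricSpace X] (θ : ℝ) (E : Set X) : ℝ :=
  sInf {s : ℝ | 0 ≤ s ∧ ∀ ε : ℝ, 0 < ε → ∃ δ₀ : ℝ, 0 < δ₀ ∧ ∀ δ : ℝ, 0 < δ → δ < δ₀ →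
    ∃ 𝒰 : Set (Set X), 𝒰.Countable ∧ E ⊆ ⋃₀ 𝒰 ∧
      (∀ U ∈ 𝒰, δ ≤ diam U ∧ diam U ≤ δ ^ θ) ∧
      ∑' U : 𝒰, ENNReal.ofReal (diam (U : Set X) ^ s) ≤ ENNReal.ofReal ε}

/-- The lower θ-intermediate dimension of a set `E` in a metric space. -/
noncomputable def lodim {X : Type*} [PseudoMetricSpace X] (θ : ℝ) (E : Set X) : ℝ :=
  sInf {s : ℝ | 0 ≤ s ∧ ∀ ε : ℝ, 0 < ε → ∀ δ₀ : ℝ, 0 < δ₀ → ∃ δ : ℝ, 0 < δ ∧ δ < δ₀ ∧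
    ∃ 𝒰 : Set (Set X), 𝒰.Countable ∧ E ⊆ ⋃₀ 𝒰 ∧
      (∀ U ∈ 𝒰, δ ≤ diam U ∧ diam U ≤ δ ^ θ) ∧
      ∑' U : 𝒰, ENNReal.ofReal (diam (U : Set X) ^ s) ≤ ENNReal.ofReal ε}

/-- `C_p^d`: the union over `n ≥ 1` of the spheres in `ℝ^d` of radius `n^{-p}` centred at
the origin. -/
noncomputable def concentric (d : ℕ) (p : ℝ) : Set (EuclideanSpace ℝ (Fin d)) :=
  {x | ∃ n : ℕ, 1 ≤ n ∧ ‖x‖ = (n : ℝ) ^ (-p)}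



lemma gap_lemma {p : ℝ} (hp : 0 < p) {n i j : ℕ} (hi : 1 ≤ i) (hij : i < j) (hjn : j ≤ n) :
    ((j : ℝ) - (i : ℝ)) * (p * (n : ℝ) ^ (-(p + 1))) ≤ (i : ℝ) ^ (-p) - (j : ℝ) ^ (-p) := by
  have ha : (1 : ℝ) ≤ (i : ℝ) := by exact_mod_cast hi
  have hab : (i : ℝ) < (j : ℝ) := by exact_mod_cast hij
  have hbn : (j : ℝ) ≤ (n : ℝ) := by exact_mod_cast hjn
  set a := (i : ℝ) with hadef
  set c := (j : ℝ) with hcdef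
  have ha0 : 0 < a := by linarith
  have hc0 : 0 < c := by linarith
  have hlog : (c - a) / c ≤ Real.log (c / a) := by
    have h1 : Real.log (a / c) ≤ a / c - 1 := Real.log_le_sub_one_of_pos (by positivity)
    have h2 : Real.log (c / a) = -Real.log (a / c) := by
      rw [← Real.log_inv]
      congr 1
      field_simp
    have h3 : (c - a) / c = 1 - a / c := by field_simp
    rw [h2, h3]
    linarith
  have hpow : 1 + p * ((c - a) / c) ≤ (c / a) ^ p := by
    rw [Real.rpow_def_of_pos (by positivity)]
    have h4 := Real.add_one_le_exp (Real.log (c / a) * p)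
    nlinarith [mul_le_mul_of_nonneg_right hlog hp.le]
  have hap : (0:ℝ) < a ^ p := Real.rpow_pos_of_pos ha0 p
  have hcp : (0:ℝ) < c ^ p := Real.rpow_pos_of_pos hc0 p
  have hid : c ^ (-p) * (c / a) ^ p = a ^ (-p) := by
    rw [Real.div_rpow hc0.le ha0.le, Real.rpow_neg hc0.le, Real.rpow_neg ha0.le]
    field_simp
  have hmono : (n : ℝ) ^ (-(p + 1)) ≤ c ^ (-(p + 1)) :=
    Real.rpow_le_rpow_of_nonpos hc0 hbn (by linarith)
  have hsplit : c ^ (-(p + 1)) = c ^ (-p) * c⁻¹ := by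
    rw [show -(p + 1) = -p + (-1) by ring, Real.rpow_add hc0, Real.rpow_neg_one]
  have hcnp : (0:ℝ) < c ^ (-p) := Real.rpow_pos_of_pos hc0 _
  have key : (c - a) * (p * (c ^ (-p) * c⁻¹)) ≤ a ^ (-p) - c ^ (-p) := by
    have h5 : c ^ (-p) * (1 + p * ((c - a) / c)) ≤ c ^ (-p) * ((c / a) ^ p) :=
      mul_le_mul_of_nonneg_left hpow hcnp.le
    rw [hid] at h5
    have hcne : c ≠ 0 := hc0.ne'
    rw [div_eq_mul_inv] at h5
    ring_nf at h5 ⊢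
    linarith
  have hmul : (c - a) * (p * (n : ℝ) ^ (-(p + 1))) ≤ (c - a) * (p * (c ^ (-p) * c⁻¹)) := by
    have : p * (n : ℝ) ^ (-(p + 1)) ≤ p * (c ^ (-p) * c⁻¹) := by
      rw [← hsplit]
      exact mul_le_mul_of_nonneg_left hmono hp.le
    exact mul_le_mul_of_nonneg_left this (by linarith)
  linarith

lemma eventually_big {C α : ℝ} (hC : 0 < C) (hα : 0 < α) (K : ℝ) :
    ∀ᶠ n : ℕ in atTop, K < C * (n : ℝ) ^ α := by
  have h1 : Tendsto (fun x : ℝ => C * x ^ α) atTop atTop :=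
    (tendsto_rpow_atTop hα).const_mul_atTop hC
  exact (h1.comp tendsto_natCast_atTop_atTop).eventually_gt_atTop K

set_option maxHeartbeats 1000000 in
lemma core {d : ℕ} {p : ℝ} (hp : 0 < p)
    {E : Set (EuclideanSpace ℝ (Fin d))} {b : ℕ → ℕ}
    (hb : ∀ i : ℕ, 1 ≤ i → (E ∩ {x | ‖x‖ = (i : ℝ) ^ (-p)}).Finite ∧
      (E ∩ {x | ‖x‖ = (i : ℝ) ^ (-p)}).ncard = b i)
    {θ s t c : ℝ} (hθ : 0 < θ) (hθ1 : θ ≤ 1) (hs : 0 ≤ s)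
    (hst : s < t) (htp : t * p < θ * (1 - s)) (hc : 0 < c) :
    ∃ n₀ : ℕ, 1 ≤ n₀ ∧ ∀ n : ℕ, n₀ ≤ n →
      c * n ≤ (Set.ncard {i : ℕ | 1 ≤ i ∧ i ≤ n ∧ 0 < b i} : ℝ) →
      ∀ δ : ℝ, 0 < δ → δ ≤ 1 →
      (n : ℝ) ^ (-(1/t)) ≤ δ → δ ≤ ((n : ℝ)/2) ^ (-(1/t)) →
      ¬ ∃ 𝒰 : Set (Set (EuclideanSpace ℝ (Fin d))), 𝒰.Countable ∧ E ⊆ ⋃₀ 𝒰 ∧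
        (∀ U ∈ 𝒰, δ ≤ diam U ∧ diam U ≤ δ ^ θ) ∧
        ∑' U : 𝒰, ENNReal.ofReal (diam (U : Set (EuclideanSpace ℝ (Fin d))) ^ s) ≤
          ENNReal.ofReal 1 := by
  classical
  have ht0 : 0 < t := lt_of_le_of_lt hs hst
  have hs1 : s < 1 := by nlinarith
  set β : ℝ := θ * (1 - s) / t with hβdef
  have hβp : p < β := by
    rw [hβdef, lt_div_iff₀ ht0]
    linarith [htp]
  have hC₂ : 0 < c * p / (2 * (2:ℝ) ^ β) := by positivity
  have E1 := eventually_big hc (show (0:ℝ) < 1 - s/t by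
    rw [sub_pos, div_lt_one ht0]; exact hst) (2 : ℝ)
  have E2 := eventually_big hC₂ (show (0:ℝ) < β - p by linarith) (1 : ℝ)
  obtain ⟨n₀', hn₀'⟩ := eventually_atTop.mp (E1.and E2)
  refine ⟨max n₀' 1, le_max_right _ _, ?_⟩
  intro n hn hdens δ hδ0 hδ1 hδlo hδhi
  rintro ⟨𝒰, h𝒰c, h𝒰cov, h𝒰diam, h𝒰sum⟩
  have hn1 : 1 ≤ n := le_trans (le_max_right _ _) hn
  have hn0R : (0:ℝ) < (n:ℝ) := by exact_mod_cast hn1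
  obtain ⟨hE1, hE2⟩ := hn₀' n (le_trans (le_max_left _ _) hn)
  set g : ℝ := p * (n : ℝ) ^ (-(p + 1)) with hgdef
  have hg : 0 < g := by positivity
  set m : ℝ := min (δ ^ s) (g * δ ^ (θ * (s - 1))) / 2 with hmdef
  have hm : 0 < m := by
    have h1 : (0:ℝ) < δ ^ s := Real.rpow_pos_of_pos hδ0 _
    have h2 : (0:ℝ) < g * δ ^ (θ * (s - 1)) := by
      have := Real.rpow_pos_of_pos hδ0 (θ * (s - 1)); positivity
    rw [hmdef]
    have := lt_min h1 h2
    linarith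
  set D : Set ℕ := {i : ℕ | 1 ≤ i ∧ i ≤ n ∧ 0 < b i} with hDdef
  have hDfin : D.Finite := (Set.finite_Icc 1 n).subset
    (fun i hi => Set.mem_Icc.mpr ⟨hi.1, hi.2.1⟩)
  set DF : Finset ℕ := hDfin.toFinset with hDFdef
  have hDcard : (D.ncard : ℝ) = (DF.card : ℝ) := by
    rw [Set.ncard_eq_toFinset_card _ hDfin]
  -- choose points
  have hpt : ∀ i ∈ DF, ∃ y : EuclideanSpace ℝ (Fin d), y ∈ E ∧ ‖y‖ = (i : ℝ) ^ (-p) := by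
    intro i hi
    obtain ⟨h1, h2, h3⟩ := hDfin.mem_toFinset.mp hi
    obtain ⟨hfin, hcard⟩ := hb i h1
    have hne : (E ∩ {x | ‖x‖ = (i : ℝ) ^ (-p)}).Nonempty :=
      Set.nonempty_of_ncard_ne_zero (by rw [hcard]; omega)
    exact ⟨hne.choose, hne.choose_spec.1, hne.choose_spec.2⟩
  choose! x hxE hxn using hpt
  have hcov : ∀ i ∈ DF, ∃ U, U ∈ 𝒰 ∧ x i ∈ U := by
    intro i hi
    obtain ⟨U, hU, hxU⟩ := h𝒰cov (hxE i hi)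
    exact ⟨U, hU, hxU⟩
  choose! f hf𝒰 hfx using hcov
  set T : Finset (Set (EuclideanSpace ℝ (Fin d))) := DF.image f with hTdef
  have hfib : DF.card = ∑ U ∈ T, (DF.filter (fun i => f i = U)).card :=
    Finset.card_eq_sum_card_fiberwise (fun i hi => Finset.mem_image_of_mem f hi)
  have hT𝒰 : ∀ U ∈ T, U ∈ 𝒰 := by
    intro U hU
    obtain ⟨i, hi, rfl⟩ := Finset.mem_image.mp hU
    exact hf𝒰 i hi
  -- per-U bound
  have hperU : ∀ U ∈ T, ((DF.filter (fun i => f i = U)).card : ℝ) * m ≤ diam U ^ s := by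
    intro U hUT
    have hU𝒰 : U ∈ 𝒰 := hT𝒰 U hUT
    obtain ⟨hdlo, hdhi⟩ := h𝒰diam U hU𝒰
    have hDpos : 0 < diam U := lt_of_lt_of_le hδ0 hdlo
    have hbdd : Bornology.IsBounded U := by
      by_contra h
      rw [diam_eq_zero_of_unbounded h] at hDpos
      exact lt_irrefl _ hDpos
    set F : Finset ℕ := DF.filter (fun i => f i = U) with hFdef
    have hFD : ∀ i ∈ F, i ∈ DF := fun i hi => (Finset.mem_filter.mp hi).1
    have hcount : ((F.card : ℝ) - 1) * g ≤ diam U := by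
      rcases F.eq_empty_or_nonempty with h | hFne
      · rw [h]
        simp only [Finset.card_empty, Nat.cast_zero]
        nlinarith [diam_nonneg (s := U), hg]
      · set i₀ := F.min' hFne with hi₀def
        set i₁ := F.max' hFne with hi₁def
        have hi₀F : i₀ ∈ F := F.min'_mem hFne
        have hi₁F : i₁ ∈ F := F.max'_mem hFne
        have hsub : F ⊆ Finset.Icc i₀ i₁ := fun i hi =>
          Finset.mem_Icc.mpr ⟨F.min'_le i hi, F.le_max' i hi⟩
        have hcardle : F.card ≤ i₁ + 1 - i₀ := by
          have := Finset.card_le_card hsub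
          rwa [Nat.card_Icc] at this
        have hle : i₀ ≤ i₁ := F.min'_le _ hi₁F
        have h1 : ((F.card : ℝ) - 1) ≤ (i₁ : ℝ) - (i₀ : ℝ) := by
          have h1' : (F.card : ℝ) ≤ ((i₁ + 1 - i₀ : ℕ) : ℝ) := Nat.cast_le.mpr hcardle
          rw [Nat.cast_sub (by omega)] at h1'
          push_cast at h1'
          linarith
        have h2 : ((i₁ : ℝ) - (i₀ : ℝ)) * g ≤ diam U := by
          rcases eq_or_lt_of_le hle with h | h
          · rw [h]
            simpa using diam_nonneg (s := U)
          · obtain ⟨h1₀, h2₀, _⟩ := hDfin.mem_toFinset.mp (hFD i₀ hi₀F)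
            obtain ⟨h1₁, h2₁, _⟩ := hDfin.mem_toFinset.mp (hFD i₁ hi₁F)
            have hgap := gap_lemma hp h1₀ h h2₁
            have hnx₀ : ‖x i₀‖ = (i₀ : ℝ) ^ (-p) := hxn i₀ (hFD i₀ hi₀F)
            have hnx₁ : ‖x i₁‖ = (i₁ : ℝ) ^ (-p) := hxn i₁ (hFD i₁ hi₁F)
            have hxiU₀ : x i₀ ∈ U := by
              have := (Finset.mem_filter.mp hi₀F).2
              rw [← this]; exact hfx i₀ (hFD i₀ hi₀F)
            have hxiU₁ : x i₁ ∈ U := by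
              have := (Finset.mem_filter.mp hi₁F).2
              rw [← this]; exact hfx i₁ (hFD i₁ hi₁F)
            have hdist : dist (x i₀) (x i₁) ≤ diam U :=
              dist_le_diam_of_mem hbdd hxiU₀ hxiU₁
            have habs : (i₀ : ℝ) ^ (-p) - (i₁ : ℝ) ^ (-p) ≤ dist (x i₀) (x i₁) := by
              rw [dist_eq_norm]
              calc (i₀ : ℝ) ^ (-p) - (i₁ : ℝ) ^ (-p) = ‖x i₀‖ - ‖x i₁‖ := by
                    rw [hnx₀, hnx₁]
                _ ≤ |‖x i₀‖ - ‖x i₁‖| := le_abs_self _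
                _ ≤ ‖x i₀ - x i₁‖ := abs_norm_sub_norm_le _ _
            rw [hgdef]
            linarith
        calc ((F.card : ℝ) - 1) * g ≤ ((i₁ : ℝ) - (i₀ : ℝ)) * g :=
              mul_le_mul_of_nonneg_right h1 hg.le
          _ ≤ diam U := h2
    rcases le_or_gt (diam U) g with hDg | hDg
    · have hk2 : (F.card : ℝ) ≤ 2 := by nlinarith [hcount, hg]
      have hmle : m ≤ δ ^ s / 2 := by
        rw [hmdef]
        have := min_le_left (δ ^ s) (g * δ ^ (θ * (s - 1)))
        linarith
      calc (F.card : ℝ) * m ≤ 2 * (δ ^ s / 2) :=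
            mul_le_mul hk2 hmle hm.le (by norm_num)
        _ = δ ^ s := by ring
        _ ≤ diam U ^ s := Real.rpow_le_rpow hδ0.le hdlo hs
    · have hk : (F.card : ℝ) ≤ 2 * diam U / g := by
        have h1 : (F.card : ℝ) - 1 ≤ diam U / g := by
          rw [le_div_iff₀ hg]; exact hcount
        have h2 : (1 : ℝ) ≤ diam U / g := by
          rw [le_div_iff₀ hg]; linarith
        rw [show 2 * diam U / g = diam U / g + diam U / g by ring]
        linarith
      have hmle : m ≤ g * δ ^ (θ * (s - 1)) / 2 := by
        rw [hmdef]
        have := min_le_right (δ ^ s) (g * δ ^ (θ * (s - 1)))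
        linarith
      have hstep : δ ^ (θ * (s - 1)) ≤ diam U ^ (s - 1) := by
        have h3 := Real.rpow_le_rpow_of_nonpos hDpos hdhi (by linarith : s - 1 ≤ 0)
        rwa [← Real.rpow_mul hδ0.le] at h3
      calc (F.card : ℝ) * m ≤ (2 * diam U / g) * (g * δ ^ (θ * (s - 1)) / 2) :=
            mul_le_mul hk hmle hm.le (by positivity)
        _ = diam U * δ ^ (θ * (s - 1)) := by field_simp
        _ ≤ diam U * diam U ^ (s - 1) := mul_le_mul_of_nonneg_left hstep hDpos.le
        _ = diam U ^ s := by
            rw [show diam U * diam U ^ (s-1) = diam U ^ (1:ℝ) * diam U ^ (s-1) by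
              rw [Real.rpow_one], ← Real.rpow_add hDpos]
            norm_num
  -- sum chain
  have hsum_real : (DF.card : ℝ) * m ≤ ∑ U ∈ T, diam U ^ s := by
    calc (DF.card : ℝ) * m
        = ∑ U ∈ T, ((DF.filter (fun i => f i = U)).card : ℝ) * m := by
          rw [← Finset.sum_mul, ← Nat.cast_sum, ← hfib]
      _ ≤ ∑ U ∈ T, diam U ^ s := Finset.sum_le_sum hperU
  have hENN : ∑ U ∈ T, ENNReal.ofReal (diam U ^ s) ≤ ENNReal.ofReal 1 := by
    calc ∑ U ∈ T, ENNReal.ofReal (diam U ^ s)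
        = ∑ U ∈ T, Set.indicator 𝒰
            (fun V => ENNReal.ofReal (diam V ^ s)) U := by
          refine Finset.sum_congr rfl fun U hUT => ?_
          rw [Set.indicator_of_mem (hT𝒰 U hUT)]
      _ ≤ ∑' V : Set (EuclideanSpace ℝ (Fin d)), Set.indicator 𝒰
            (fun V => ENNReal.ofReal (diam V ^ s)) V := ENNReal.sum_le_tsum T
      _ = ∑' U : 𝒰, ENNReal.ofReal (diam (U : Set (EuclideanSpace ℝ (Fin d))) ^ s) :=
          (tsum_subtype 𝒰 _).symm
      _ ≤ ENNReal.ofReal 1 := h𝒰sum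
  have hreal1 : ∑ U ∈ T, diam U ^ s ≤ 1 := by
    rw [← ENNReal.ofReal_sum_of_nonneg
      (fun U _ => Real.rpow_nonneg diam_nonneg s)] at hENN
    exact (ENNReal.ofReal_le_ofReal_iff one_pos.le).mp hENN
  have hfinal : c * (n : ℝ) * m ≤ 1 := by
    have h1 : c * (n : ℝ) ≤ (DF.card : ℝ) := by
      rw [← hDcard]; exact hdens
    have h2 : c * (n : ℝ) * m ≤ (DF.card : ℝ) * m :=
      mul_le_mul_of_nonneg_right h1 hm.le
    linarith
  -- largeness lower bounds
  set A : ℝ := (n : ℝ) ^ (-(1/t) * s) with hAdef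
  set B : ℝ := g * ((n : ℝ)/2) ^ (-(1/t) * (θ * (s - 1))) with hBdef
  have hδs : A ≤ δ ^ s := by
    have h1 := Real.rpow_le_rpow (Real.rpow_nonneg hn0R.le _) hδlo hs
    rwa [← Real.rpow_mul hn0R.le] at h1
  have hn2 : (0:ℝ) < (n : ℝ)/2 := by positivity
  have hδe : ((n : ℝ)/2) ^ (-(1/t) * (θ * (s - 1))) ≤ δ ^ (θ * (s - 1)) := by
    have h3 := Real.rpow_le_rpow_of_nonpos hδ0 hδhi
      (mul_nonpos_of_nonneg_of_nonpos hθ.le (by linarith) : θ * (s - 1) ≤ 0)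
    rwa [← Real.rpow_mul hn2.le] at h3
  have hmlow : min A B / 2 ≤ m := by
    rw [hmdef]
    have h1 : min A B ≤ min (δ ^ s) (g * δ ^ (θ * (s - 1))) := by
      apply min_le_min hδs
      exact mul_le_mul_of_nonneg_left hδe hg.le
    linarith
  have hA1 : 1 < c * (n : ℝ) * A / 2 := by
    have hA : (n : ℝ) * A = (n : ℝ) ^ (1 - s/t) := by
      calc (n : ℝ) * A = (n : ℝ) ^ (1:ℝ) * (n : ℝ) ^ (-(1/t) * s) := by
            rw [Real.rpow_one]
        _ = (n : ℝ) ^ (1 + -(1/t) * s) := (Real.rpow_add hn0R _ _).symm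
        _ = (n : ℝ) ^ (1 - s/t) := by ring_nf
    rw [show c * (n:ℝ) * A / 2 = c * ((n:ℝ) * A) / 2 by ring, hA]
    linarith
  have hB1 : 1 < c * (n : ℝ) * B / 2 := by
    have heβ : -(1/t) * (θ * (s - 1)) = β := by
      rw [hβdef]; field_simp; ring
    have hdiv : ((n : ℝ)/2) ^ β = (n : ℝ) ^ β / (2:ℝ) ^ β :=
      Real.div_rpow hn0R.le (by norm_num) _
    have hexp : (n : ℝ) ^ (1:ℝ) * (n : ℝ) ^ (-(p+1)) * (n : ℝ) ^ β
        = (n : ℝ) ^ (β - p) := by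
      rw [← Real.rpow_add hn0R, ← Real.rpow_add hn0R]
      ring_nf
    have : c * (n : ℝ) * B / 2 = (c * p / (2 * (2:ℝ) ^ β)) * ((n : ℝ) ^ (β - p)) := by
      rw [hBdef, heβ, hdiv, hgdef, ← hexp, Real.rpow_one]
      have h2β : ((2:ℝ) ^ β) ≠ 0 := (Real.rpow_pos_of_pos (by norm_num) _).ne'
      field_simp
    rw [this]
    linarith
  have hcontra : 1 < c * (n : ℝ) * m := by
    have hcn : (0:ℝ) ≤ c * (n : ℝ) := by positivity
    rcases le_total A B with h | h
    · have : 1 < c * (n : ℝ) * (min A B / 2) := by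
        rw [min_eq_left h]
        calc (1:ℝ) < c * (n:ℝ) * A / 2 := hA1
          _ = c * (n:ℝ) * (A / 2) := by ring
      exact this.trans_le (mul_le_mul_of_nonneg_left hmlow hcn)
    · have : 1 < c * (n : ℝ) * (min A B / 2) := by
        rw [min_eq_right h]
        calc (1:ℝ) < c * (n:ℝ) * B / 2 := hB1
          _ = c * (n:ℝ) * (B / 2) := by ring
      exact this.trans_le (mul_le_mul_of_nonneg_left hmlow hcn)
  linarith

set_option maxHeartbeats 1000000 in
lemma cover_mem {d : ℕ} (hd : 2 ≤ d) {p : ℝ} (hp : 0 < p)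
    {E : Set (EuclideanSpace ℝ (Fin d))} (hE : E ⊆ concentric d p)
    {θ : ℝ} (hθ : 0 < θ) (hθ1 : θ ≤ 1) {s : ℝ} (hsd : s = (d : ℝ) + 1) :
    0 ≤ s ∧ ∀ ε : ℝ, 0 < ε → ∃ δ₀ : ℝ, 0 < δ₀ ∧ ∀ δ : ℝ, 0 < δ → δ < δ₀ →
      ∃ 𝒰 : Set (Set (EuclideanSpace ℝ (Fin d))), 𝒰.Countable ∧ E ⊆ ⋃₀ 𝒰 ∧
        (∀ U ∈ 𝒰, δ ≤ diam U ∧ diam U ≤ δ ^ θ) ∧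
        ∑' U : 𝒰, ENNReal.ofReal (diam (U : Set (EuclideanSpace ℝ (Fin d))) ^ s) ≤
          ENNReal.ofReal ε := by
  classical
  have hd0 : (0:ℝ) < d := by positivity
  set sq : ℝ := Real.sqrt d with hsqdef
  have hsq1 : 1 ≤ sq := Real.one_le_sqrt.mpr (by exact_mod_cast (by omega : 1 ≤ d))
  have hsq0 : 0 < sq := lt_of_lt_of_le one_pos hsq1
  set Cst : ℝ := (7 * sq) ^ d with hCdef
  have hCst : 0 < Cst := by positivity
  refine ⟨by rw [hsd]; positivity, ?_⟩
  intro ε hε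
  refine ⟨min 1 (ε / Cst), by positivity, ?_⟩
  intro δ hδ0 hδlt
  have hδ1 : δ ≤ 1 := le_of_lt (lt_of_lt_of_le hδlt (min_le_left _ _))
  have hδε : Cst * δ < ε := by
    have h1 : δ < ε / Cst := lt_of_lt_of_le hδlt (min_le_right _ _)
    rw [lt_div_iff₀ hCst] at h1
    linarith
  set h : ℝ := δ / sq with hhdef
  have hh0 : 0 < h := by positivity
  have hh1 : h ≤ 1 := by
    rw [hhdef, div_le_one hsq0]; linarith
  have hsqh : sq * h = δ := by rw [hhdef]; field_simp
  obtain ⟨M, hM2, hMle⟩ : ∃ M : ℕ, 2 / h ≤ (M : ℝ) ∧ (M : ℝ) ≤ 3 / h := by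
    refine ⟨⌈2 / h⌉₊, Nat.le_ceil _, ?_⟩
    have h1 := (Nat.ceil_lt_add_one (by positivity : (0:ℝ) ≤ 2 / h)).le
    have h2 : (1:ℝ) ≤ 1 / h := by rw [le_div_iff₀ hh0]; linarith
    have h3 : 2 / h + 1 ≤ 3 / h := by
      rw [show (3:ℝ)/h = 2/h + 1/h by ring]
      linarith
    linarith
  set KF : Finset (Fin d → ℤ) := Fintype.piFinset (fun _ => Finset.Icc (-(M:ℤ)) (M:ℤ))
    with hKFdef
  set Ucube : (Fin d → ℤ) → Set (EuclideanSpace ℝ (Fin d)) := fun k =>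
    {x | ∀ j, (k j : ℝ) * h ≤ x j ∧ x j ≤ (k j : ℝ) * h + h} with hUdef
  -- distance control inside a cube
  have hdistcube : ∀ k, ∀ x ∈ Ucube k, ∀ y ∈ Ucube k, dist x y ≤ δ := by
    intro k x hx y hy
    rw [EuclideanSpace.dist_eq]
    have hsum : (∑ j, dist (x j) (y j) ^ 2) ≤ ∑ _j : Fin d, h ^ 2 := by
      refine Finset.sum_le_sum fun j _ => ?_
      have h1 := (hx j).1; have h2 := (hx j).2
      have h3 := (hy j).1; have h4 := (hy j).2
      have habs : dist (x j) (y j) ≤ h := by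
        rw [Real.dist_eq]
        rw [abs_le]
        constructor <;> linarith
      have hdn : (0:ℝ) ≤ dist (x j) (y j) := dist_nonneg
      nlinarith
    have hconst : (∑ _j : Fin d, h ^ 2) = (d : ℝ) * h ^ 2 := by
      rw [Finset.sum_const, Finset.card_univ, Fintype.card_fin, nsmul_eq_mul]
    calc Real.sqrt (∑ j, dist (x j) (y j) ^ 2)
        ≤ Real.sqrt ((d : ℝ) * h ^ 2) := Real.sqrt_le_sqrt (by rw [← hconst]; exact hsum)
      _ = sq * h := by
          rw [Real.sqrt_mul (le_of_lt hd0), Real.sqrt_sq hh0.le]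
      _ = δ := hsqh
  -- corners
  set A : (Fin d → ℤ) → EuclideanSpace ℝ (Fin d) := fun k =>
    (WithLp.equiv 2 (Fin d → ℝ)).symm (fun j => (k j : ℝ) * h) with hAdef
  set B : (Fin d → ℤ) → EuclideanSpace ℝ (Fin d) := fun k =>
    (WithLp.equiv 2 (Fin d → ℝ)).symm (fun j => (k j : ℝ) * h + h) with hBdef
  have hAj : ∀ k j, A k j = (k j : ℝ) * h := fun k j => rfl
  have hBj : ∀ k j, B k j = (k j : ℝ) * h + h := fun k j => rfl
  have hAmem : ∀ k, A k ∈ Ucube k := by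
    intro k j
    rw [hAj]
    exact ⟨le_refl _, by linarith⟩
  have hBmem : ∀ k, B k ∈ Ucube k := by
    intro k j
    rw [hBj]
    exact ⟨by linarith, le_refl _⟩
  have hABdist : ∀ k, dist (A k) (B k) = δ := by
    intro k
    rw [EuclideanSpace.dist_eq]
    have : ∀ j : Fin d, dist (A k j) (B k j) ^ 2 = h ^ 2 := by
      intro j
      rw [hAj, hBj, Real.dist_eq]
      rw [show (k j : ℝ) * h - ((k j : ℝ) * h + h) = -h by ring, abs_neg,
        abs_of_nonneg hh0.le]
    rw [Finset.sum_congr rfl (fun j _ => this j), Finset.sum_const, Finset.card_univ,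
      Fintype.card_fin, nsmul_eq_mul, Real.sqrt_mul (le_of_lt hd0), Real.sqrt_sq hh0.le]
    exact hsqh
  have hbdd : ∀ k, Bornology.IsBounded (Ucube k) := by
    intro k
    apply (Metric.isBounded_closedBall (x := A k) (r := δ)).subset
    intro x hx
    exact Metric.mem_closedBall.mpr (hdistcube k x hx (A k) (hAmem k))
  have hdiamlo : ∀ k, δ ≤ diam (Ucube k) := by
    intro k
    rw [← hABdist k]
    exact dist_le_diam_of_mem (hbdd k) (hAmem k) (hBmem k)
  have hdiamhi : ∀ k, diam (Ucube k) ≤ δ := fun k =>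
    diam_le_of_forall_dist_le hδ0.le (hdistcube k)
  have hδθ : δ ≤ δ ^ θ := by
    have := Real.rpow_le_rpow_of_exponent_ge hδ0 hδ1 hθ1
    rwa [Real.rpow_one] at this
  refine ⟨↑(KF.image Ucube), (KF.image Ucube).countable_toSet, ?_, ?_, ?_⟩
  · -- covers E
    intro x hxE
    obtain ⟨nn, hnn1, hnorm⟩ := hE hxE
    have hxnorm1 : ‖x‖ ≤ 1 := by
      rw [hnorm]
      exact Real.rpow_le_one_of_one_le_of_nonpos (by exact_mod_cast hnn1) (by linarith)
    have hcoord : ∀ j, |x j| ≤ 1 := by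
      intro j
      have h1 : (x j) ^ 2 ≤ ∑ i, ‖x i‖ ^ 2 := by
        refine Finset.single_le_sum (f := fun i => ‖x i‖ ^ 2)
          (fun i _ => by positivity) (Finset.mem_univ j) |>.trans_eq' ?_
        rw [Real.norm_eq_abs, sq_abs]
      have h2 : |x j| = Real.sqrt ((x j) ^ 2) := (Real.sqrt_sq_eq_abs _).symm
      rw [h2]
      calc Real.sqrt ((x j) ^ 2) ≤ Real.sqrt (∑ i, ‖x i‖ ^ 2) := Real.sqrt_le_sqrt h1
        _ = ‖x‖ := (EuclideanSpace.norm_eq x).symm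
        _ ≤ 1 := hxnorm1
    set k : Fin d → ℤ := fun j => ⌊x j / h⌋ with hkdef
    have h1h : (1:ℝ) ≤ 1/h := by rw [le_div_iff₀ hh0]; linarith
    have hMbig : 1/h + 1 ≤ (M:ℝ) := by
      have : 1/h + 1 ≤ 2/h := by
        rw [show (2:ℝ)/h = 1/h + 1/h by ring]
        linarith
      linarith
    have hkKF : k ∈ KF := by
      rw [hKFdef, Fintype.mem_piFinset]
      intro j
      rw [Finset.mem_Icc]
      have hxj1 : x j ≤ 1 := (abs_le.mp (hcoord j)).2
      have hxj2 : -1 ≤ x j := (abs_le.mp (hcoord j)).1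
      have hfl : ((⌊x j / h⌋ : ℤ) : ℝ) ≤ x j / h := Int.floor_le _
      have hfl2 : x j / h - 1 < ((⌊x j / h⌋ : ℤ) : ℝ) := Int.sub_one_lt_floor _
      have hdiv1 : x j / h ≤ 1 / h := by gcongr
      have hdiv2 : (-1 : ℝ) / h ≤ x j / h := by gcongr
      constructor
      · have hr : -(M:ℝ) ≤ ((k j : ℤ) : ℝ) := by
          have hneg : (-1 : ℝ)/h = -(1/h) := by ring
          rw [hkdef]
          rw [hneg] at hdiv2
          linarith
        exact_mod_cast hr
      · have hr : ((k j : ℤ) : ℝ) ≤ (M:ℝ) := by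
          rw [hkdef]
          linarith
        exact_mod_cast hr
    refine ⟨Ucube k, Finset.mem_coe.mpr (Finset.mem_image_of_mem _ hkKF), ?_⟩
    intro j
    have hfl : ((⌊x j / h⌋ : ℤ) : ℝ) ≤ x j / h := Int.floor_le _
    have hfl2 : x j / h < ((⌊x j / h⌋ : ℤ) : ℝ) + 1 := Int.lt_floor_add_one _
    constructor
    · have h5 := mul_le_mul_of_nonneg_right hfl hh0.le
      rwa [div_mul_cancel₀ _ hh0.ne'] at h5
    · have h5 := mul_le_mul_of_nonneg_right hfl2.le hh0.le
      rw [div_mul_cancel₀ _ hh0.ne'] at h5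
      calc x j ≤ (((⌊x j / h⌋ : ℤ) : ℝ) + 1) * h := h5
        _ = ((k j : ℤ) : ℝ) * h + h := by rw [hkdef]; ring
  · intro U hU
    obtain ⟨k, _, rfl⟩ := Finset.mem_image.mp (Finset.mem_coe.mp hU)
    exact ⟨hdiamlo k, (hdiamhi k).trans hδθ⟩
  · -- sum bound
    have hterm : ∀ U ∈ KF.image Ucube,
        ENNReal.ofReal (diam U ^ s) ≤ ENNReal.ofReal (δ ^ s) := by
      intro U hU
      obtain ⟨k, _, rfl⟩ := Finset.mem_image.mp hU
      exact ENNReal.ofReal_le_ofReal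
        (Real.rpow_le_rpow diam_nonneg (hdiamhi k) (by rw [hsd]; positivity))
    calc ∑' U : ↑↑(KF.image Ucube),
          ENNReal.ofReal (diam (U : Set (EuclideanSpace ℝ (Fin d))) ^ s)
        = ∑ U ∈ KF.image Ucube, ENNReal.ofReal (diam U ^ s) := by
          exact Finset.tsum_subtype (KF.image Ucube)
            (fun U => ENNReal.ofReal (diam U ^ s))
      _ ≤ (KF.image Ucube).card • ENNReal.ofReal (δ ^ s) :=
          Finset.sum_le_card_nsmul _ _ _ hterm
      _ ≤ ((2*M+1)^d : ℕ) • ENNReal.ofReal (δ ^ s) := by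
          have hcardle : (KF.image Ucube).card ≤ (2*M+1)^d := by
            have h1 : (KF.image Ucube).card ≤ KF.card := Finset.card_image_le
            have hfac : (Finset.Icc (-(M:ℤ)) (M:ℤ)).card = 2*M+1 := by
              rw [Int.card_Icc]; omega
            have h2 : KF.card = (2*M+1)^d := by
              rw [hKFdef, Fintype.card_piFinset]
              simp [hfac]
            omega
          rw [nsmul_eq_mul, nsmul_eq_mul]
          exact mul_le_mul_left (by exact_mod_cast Nat.cast_le.mpr hcardle) _
      _ = ENNReal.ofReal ((((2*M+1)^d : ℕ) : ℝ) * δ ^ s) := by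
          rw [nsmul_eq_mul, ← ENNReal.ofReal_natCast ((2*M+1)^d),
            ← ENNReal.ofReal_mul (by positivity)]
      _ ≤ ENNReal.ofReal ε := by
          apply ENNReal.ofReal_le_ofReal
          have h1h : (1:ℝ) ≤ 1/h := by rw [le_div_iff₀ hh0]; linarith
          have h7 : ((((2*M+1)^d : ℕ)) : ℝ) ≤ (7/h)^d := by
            push_cast
            apply pow_le_pow_left₀ (by positivity)
            have e3 : (7:ℝ)/h = 2*(3/h) + 1/h := by ring
            linarith [hMle, h1h, e3.le, e3.ge]
          have hδs0 : (0:ℝ) ≤ δ ^ s := Real.rpow_nonneg hδ0.le _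
          have hδsval : δ ^ s = δ ^ (d+1 : ℕ) := by
            rw [hsd, show ((d:ℝ)+1) = ((d+1:ℕ):ℝ) by push_cast; ring, Real.rpow_natCast]
          have hkey : (7/h)^d * δ ^ (d+1 : ℕ) = Cst * δ := by
            rw [hCdef, hhdef, pow_succ]
            rw [div_div_eq_mul_div, div_pow]
            field_simp
          calc ((((2*M+1)^d : ℕ)) : ℝ) * δ ^ s ≤ (7/h)^d * δ ^ s := by
                apply mul_le_mul_of_nonneg_right h7 hδs0
            _ = Cst * δ := by rw [hδsval]; exact hkey
            _ ≤ ε := hδε.le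

theorem stmt12 (d : ℕ) (hd : 2 ≤ d) (p : ℝ) (hp : 0 < p)
    (E : Set (EuclideanSpace ℝ (Fin d))) (hE : E ⊆ concentric d p) (b : ℕ → ℕ)
    (hb : ∀ i : ℕ, 1 ≤ i → (E ∩ {x | ‖x‖ = (i : ℝ) ^ (-p)}).Finite ∧
      (E ∩ {x | ‖x‖ = (i : ℝ) ^ (-p)}).ncard = b i) :
    (0 < liminf (fun n : ℕ =>
        (Set.ncard {i : ℕ | 1 ≤ i ∧ i ≤ n ∧ 0 < b i} : ℝ) / n) atTop →
      ∀ θ : ℝ, 0 < θ → θ ≤ 1 → θ / (p + θ) ≤ lodim θ E) ∧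
    (0 < limsup (fun n : ℕ =>
        (Set.ncard {i : ℕ | 1 ≤ i ∧ i ≤ n ∧ 0 < b i} : ℝ) / n) atTop →
      ∀ θ : ℝ, 0 < θ → θ ≤ 1 → θ / (p + θ) ≤ updim θ E) := by
  classical
  set F : ℕ → ℝ := fun n : ℕ =>
    (Set.ncard {i : ℕ | 1 ≤ i ∧ i ≤ n ∧ 0 < b i} : ℝ) / n with hFdef
  have hF0 : ∀ n : ℕ, (0:ℝ) ≤ F n := fun n => by positivity
  have hbddF : Filter.IsBoundedUnder (· ≥ ·) atTop F := isBoundedUnder_of ⟨0, hF0⟩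
  have hdens_step : ∀ c : ℝ, ∀ n : ℕ, c < F n →
      c * n ≤ (Set.ncard {i : ℕ | 1 ≤ i ∧ i ≤ n ∧ 0 < b i} : ℝ) := by
    intro c n hn
    rcases Nat.eq_zero_or_pos n with h | h
    · subst h; simp
    · have hnpos : (0:ℝ) < n := by exact_mod_cast h
      rw [hFdef] at hn
      exact le_of_lt ((lt_div_iff₀ hnpos).mp hn)
  -- common contradiction machinery
  have main : ∀ θ s : ℝ, 0 < θ → θ ≤ 1 → 0 ≤ s → s < θ / (p + θ) → ∀ c : ℝ, 0 < c →
      ∃ t : ℝ, s < t ∧ t * p < θ * (1 - s) ∧ 0 < t := by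
    intro θ s hθ hθ1 hs0 hcon c hc
    have hpθ : (0:ℝ) < p + θ := by linarith
    have hspθ : s * (p + θ) < θ := (lt_div_iff₀ hpθ).mp hcon
    have hsp : s * p < θ * (1 - s) := by nlinarith
    have hsdiv : s < θ * (1 - s) / p := (lt_div_iff₀ hp).mpr hsp
    refine ⟨(s + θ * (1 - s) / p) / 2, by linarith, ?_, by linarith⟩
    have h1 : (s + θ * (1 - s) / p) / 2 < θ * (1 - s) / p := by linarith
    exact (lt_div_iff₀ hp).mp h1
  constructor
  · -- liminf / lodim
    intro hli θ hθ hθ1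
    set c : ℝ := liminf F atTop / 2 with hcdef
    have hc : 0 < c := by rw [hcdef]; linarith
    have hev' : ∀ᶠ n in atTop, c < F n :=
      eventually_lt_of_lt_liminf (by rw [hcdef]; linarith) hbddF
    have hev : ∀ᶠ n : ℕ in atTop, c * n ≤
        (Set.ncard {i : ℕ | 1 ≤ i ∧ i ≤ n ∧ 0 < b i} : ℝ) :=
      hev'.mono fun n hn => hdens_step c n hn
    obtain ⟨n₁, hn₁⟩ := eventually_atTop.mp hev
    have hmem_up := cover_mem hd hp hE hθ hθ1 (rfl : ((d:ℝ)+1) = (d:ℝ)+1)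
    unfold lodim
    refine le_csInf ⟨(d:ℝ)+1, hmem_up.1, ?_⟩ ?_
    · intro ε hε δ₀ hδ₀
      obtain ⟨δ₁, hδ₁, H⟩ := hmem_up.2 ε hε
      refine ⟨min δ₀ δ₁ / 2, by positivity, ?_, ?_⟩
      · calc min δ₀ δ₁ / 2 < min δ₀ δ₁ := half_lt_self (by positivity)
          _ ≤ δ₀ := min_le_left _ _
      · exact H _ (by positivity)
          (lt_of_lt_of_le (half_lt_self (by positivity)) (min_le_right _ _))
    · rintro s ⟨hs0, hscov⟩
      by_contra hcon
      rw [not_le] at hcon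
      obtain ⟨t, hst, htp, ht0⟩ := main θ s hθ hθ1 hs0 hcon c hc
      obtain ⟨n₀, hn₀1, hcore⟩ := core hp hb hθ hθ1 hs0 hst htp hc
      set N₀ : ℕ := max n₀ n₁ with hN₀def
      have hN₀1 : 1 ≤ N₀ := le_trans hn₀1 (le_max_left _ _)
      have hN₀R : (1:ℝ) ≤ (N₀:ℝ) := by exact_mod_cast hN₀1
      have hN₀pos : (0:ℝ) < (N₀:ℝ) := by linarith
      set δ₀ : ℝ := min ((N₀:ℝ) ^ (-(1/t))) 1 with hδ₀def
      have hδ₀pos : 0 < δ₀ := lt_min (Real.rpow_pos_of_pos hN₀pos _) one_pos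
      obtain ⟨δ, hδ0, hδlt, 𝒰, hcov1, hcov2, hcov3, hcov4⟩ := hscov 1 one_pos δ₀ hδ₀pos
      have hδ1 : δ ≤ 1 := (lt_of_lt_of_le hδlt (min_le_right _ _)).le
      have hmt : -t ≤ 0 := by linarith
      have hm1t : -(1/t) ≤ 0 := by
        have : (0:ℝ) < 1/t := by positivity
        linarith
      set n : ℕ := ⌈δ ^ (-t)⌉₊ with hndef
      have hδt1 : (1:ℝ) ≤ δ ^ (-t) :=
        Real.one_le_rpow_of_pos_of_le_one_of_nonpos hδ0 hδ1 hmt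
      have hδtpos : (0:ℝ) < δ ^ (-t) := Real.rpow_pos_of_pos hδ0 _
      have hnlow : δ ^ (-t) ≤ (n:ℝ) := Nat.le_ceil _
      have hnpos : (0:ℝ) < (n:ℝ) := lt_of_lt_of_le (lt_of_lt_of_le one_pos hδt1) hnlow
      have hnhigh : (n:ℝ) ≤ 2 * δ ^ (-t) := by
        have h1 := (Nat.ceil_lt_add_one (le_of_lt hδtpos)).le
        rw [← hndef] at h1
        linarith
      have hδinv : (δ ^ (-t) : ℝ) ^ (-(1/t)) = δ := by
        rw [← Real.rpow_mul hδ0.le, show (-t) * (-(1/t)) = 1 by field_simp, Real.rpow_one]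
      have hNn : (N₀:ℝ) ≤ (n:ℝ) := by
        have h1 : δ ≤ (N₀:ℝ) ^ (-(1/t)) := (lt_of_lt_of_le hδlt (min_le_left _ _)).le
        have h2 := Real.rpow_le_rpow_of_nonpos hδ0 h1 hmt
        rw [← Real.rpow_mul hN₀pos.le, show (-(1/t)) * (-t) = 1 by field_simp,
          Real.rpow_one] at h2
        linarith
      have hNn' : N₀ ≤ n := by exact_mod_cast hNn
      have hnn₀ : n₀ ≤ n := le_trans (le_max_left _ _) hNn'
      have hdens := hn₁ n (le_trans (le_max_right _ _) hNn')
      have hnlo' : (n:ℝ) ^ (-(1/t)) ≤ δ := by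
        have h2 := Real.rpow_le_rpow_of_nonpos hδtpos hnlow hm1t
        rwa [hδinv] at h2
      have hnhi' : δ ≤ ((n:ℝ)/2) ^ (-(1/t)) := by
        have hhalf : (0:ℝ) < (n:ℝ)/2 := by linarith
        have h1 : (n:ℝ)/2 ≤ δ ^ (-t) := by linarith
        have h2 := Real.rpow_le_rpow_of_nonpos hhalf h1 hm1t
        rwa [hδinv] at h2
      exact hcore n hnn₀ hdens δ hδ0 hδ1 hnlo' hnhi' ⟨𝒰, hcov1, hcov2, hcov3, hcov4⟩
  · -- limsup / updim
    intro hls θ hθ hθ1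
    set c : ℝ := limsup F atTop / 2 with hcdef
    have hc : 0 < c := by rw [hcdef]; linarith
    have hfreq : ∃ᶠ n in atTop, c < F n :=
      frequently_lt_of_lt_limsup hbddF.isCoboundedUnder_le (by rw [hcdef]; linarith)
    have hmem_up := cover_mem hd hp hE hθ hθ1 (rfl : ((d:ℝ)+1) = (d:ℝ)+1)
    unfold updim
    refine le_csInf ⟨(d:ℝ)+1, hmem_up⟩ ?_
    rintro s ⟨hs0, hscov⟩
    by_contra hcon
    rw [not_le] at hcon
    obtain ⟨t, hst, htp, ht0⟩ := main θ s hθ hθ1 hs0 hcon c hc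
    obtain ⟨n₀, hn₀1, hcore⟩ := core hp hb hθ hθ1 hs0 hst htp hc
    obtain ⟨δ₀, hδ₀pos, H⟩ := hscov 1 one_pos
    have hm1t : -(1/t) ≤ 0 := by
      have : (0:ℝ) < 1/t := by positivity
      linarith
    have hev2 : ∀ᶠ n : ℕ in atTop, (n₀ ≤ n ∧ 1 ≤ n) ∧ (n:ℝ) ^ (-(1/t)) < δ₀ := by
      refine ((eventually_ge_atTop n₀).and (eventually_ge_atTop 1)).and ?_
      have htend : Tendsto (fun n : ℕ => (n:ℝ) ^ (-(1/t))) atTop (nhds 0) :=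
        (tendsto_rpow_neg_atTop (by positivity : (0:ℝ) < 1/t)).comp
          tendsto_natCast_atTop_atTop
      exact htend.eventually_lt_const hδ₀pos
    obtain ⟨n, hcn, ⟨⟨hnn₀, hn1⟩, hnδ₀⟩⟩ := (hfreq.and_eventually hev2).exists
    have hn1R : (1:ℝ) ≤ (n:ℝ) := by exact_mod_cast hn1
    have hnpos : (0:ℝ) < (n:ℝ) := by linarith
    have hdens := hdens_step c n hcn
    set δ : ℝ := (n:ℝ) ^ (-(1/t)) with hδdef
    have hδ0 : 0 < δ := Real.rpow_pos_of_pos hnpos _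
    have hδ1 : δ ≤ 1 := Real.rpow_le_one_of_one_le_of_nonpos hn1R hm1t
    have hnhi' : δ ≤ ((n:ℝ)/2) ^ (-(1/t)) :=
      Real.rpow_le_rpow_of_nonpos (by linarith) (by linarith) hm1t
    exact hcore n hnn₀ hdens δ hδ0 hδ1 (le_refl _) hnhi' (H δ hδ0 hnδ₀)
end

section
/- Let d ≥ 2 be an integer, p > 0, and let E ⊆ C_p^d be a set such that for each i ∈ ℕ the intersection of E with the sphere of radius i^{-p} centred at the origin is a finite set of cardinality b_i. If l > 0 satisfies limsup_{n→∞} log(Σ_{i=1}^{n} b_i)/log(n) < l, then for all θ ∈ (0,1], updim_θ(E) ≤ θ·l·d/(p·d + θ·l). In particular, if limsup_{n→∞} log(Σ_{i=1}^{n} b_i)/log(n) < ∞, then updim_θ(E) → 0 as θ → 0⁺, so the intermediate dimensions of E are continuous at zero. -/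
open Set Metric Filter

lemma aux_tsum_le_ncard {α : Type*} {s : Set α} (hs : s.Finite) {f : α → ENNReal} {c : ENNReal}
    (h : ∀ x ∈ s, f x ≤ c) : ∑' x : s, f x ≤ s.ncard * c := by
  haveI := hs.fintype
  rw [tsum_fintype]
  calc ∑ x : s, f ↑x ≤ ∑ _x : s, c := Finset.sum_le_sum fun x _ => h x x.2
    _ = Fintype.card s * c := by rw [Finset.sum_const, Finset.card_univ, nsmul_eq_mul]
    _ = s.ncard * c := by rw [← Nat.card_coe_set_eq, Nat.card_eq_fintype_card]

lemma aux_coord_le_norm {d : ℕ} (x : EuclideanSpace ℝ (Fin d)) (i : Fin d) : |x i| ≤ ‖x‖ := by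
  rw [EuclideanSpace.norm_eq, ← Real.sqrt_sq_eq_abs]
  apply Real.sqrt_le_sqrt
  have := Finset.single_le_sum (f := fun j => ‖x j‖ ^ 2) (fun j _ => sq_nonneg _)
    (Finset.mem_univ i)
  simpa [Real.norm_eq_abs, sq_abs] using this

lemma aux_cover (d : ℕ) (hd : 2 ≤ d) (p : ℝ) (hp : 0 < p)
    (E : Set (EuclideanSpace ℝ (Fin d))) (hE : E ⊆ concentric d p) (b : ℕ → ℕ)
    (hb : ∀ i : ℕ, 1 ≤ i → (E ∩ {x | ‖x‖ = (i : ℝ) ^ (-p)}).Finite ∧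
      (E ∩ {x | ‖x‖ = (i : ℝ) ^ (-p)}).ncard = b i)
    (l : ℝ) (hl : 0 < l) (N₀ : ℕ)
    (hBle : ∀ n : ℕ, N₀ ≤ n → 2 ≤ n → (∑ i ∈ Finset.Icc 1 n, (b i : ℝ)) ≤ (n : ℝ) ^ l)
    (θ t γ : ℝ) (hθ0 : 0 < θ) (hθ1 : θ ≤ 1) (ht0 : 0 ≤ t)
    (hγ0 : 0 < γ) (hγt : γ * l < t) (hγθ : γ * p < θ)
    (δ ε : ℝ) (hδ0 : 0 < δ) (hδ1 : δ < 1)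
    (hN2 : ((N₀ : ℝ) + 2) ≤ δ ^ (-γ))
    (h3 : (2:ℝ) ^ l * δ ^ (t - γ * l) ≤ ε / 2)
    (h4 : (2 * Real.sqrt d + 4) ^ d * δ ^ ((γ * p - θ) * d + θ * t) ≤ ε / 2) :
    ∃ 𝒰 : Set (Set (EuclideanSpace ℝ (Fin d))), 𝒰.Countable ∧ E ⊆ ⋃₀ 𝒰 ∧
      (∀ U ∈ 𝒰, δ ≤ diam U ∧ diam U ≤ δ ^ θ) ∧
      ∑' U : 𝒰, ENNReal.ofReal (diam (U : Set (EuclideanSpace ℝ (Fin d))) ^ t)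
        ≤ ENNReal.ofReal ε := by
  have hd0 : (0:ℝ) < d := by positivity
  have hsd : 0 < Real.sqrt d := Real.sqrt_pos.mpr hd0
  set C : ℝ := 2 * Real.sqrt d + 4 with hC
  have hC0 : 0 < C := by positivity
  have hδle : δ ≤ δ ^ θ := by
    nth_rewrite 1 [← Real.rpow_one δ]
    exact Real.rpow_le_rpow_of_exponent_ge hδ0 hδ1.le hθ1
  have hδθ0 : 0 < δ ^ θ := Real.rpow_pos_of_pos hδ0 θ
  -- M
  set M : ℕ := ⌈δ ^ (-γ)⌉₊ with hMdef
  have hxpos : 0 < δ ^ (-γ) := Real.rpow_pos_of_pos hδ0 _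
  have hx1 : 1 ≤ δ ^ (-γ) :=
    Real.one_le_rpow_of_pos_of_le_one_of_nonpos hδ0 hδ1.le (by linarith)
  have hMge : δ ^ (-γ) ≤ (M:ℝ) := Nat.le_ceil _
  have hMle : (M:ℝ) ≤ 2 * δ ^ (-γ) := by
    have := Nat.ceil_lt_add_one hxpos.le (R := ℝ) (a := δ ^ (-γ))
    linarith
  have hM0 : 0 < (M:ℝ) := lt_of_lt_of_le hxpos hMge
  have hMN : N₀ ≤ M ∧ 2 ≤ M := by
    have : ((N₀ + 2 : ℕ) : ℝ) ≤ (M:ℝ) := by push_cast; linarith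
    have := Nat.cast_le.mp this
    omega
  -- r
  set r : ℝ := (M:ℝ) ^ (-p) with hrdef
  have hr0 : 0 < r := Real.rpow_pos_of_pos hM0 _
  have hrle : r ≤ δ ^ (γ * p) := by
    have h1 : (M:ℝ) ^ (-p) ≤ (δ ^ (-γ)) ^ (-p) := by
      rw [Real.rpow_neg hM0.le, Real.rpow_neg hxpos.le]
      exact inv_anti₀ (Real.rpow_pos_of_pos hxpos p)
        (Real.rpow_le_rpow hxpos.le hMge hp.le)
    calc r ≤ (δ ^ (-γ)) ^ (-p) := h1
      _ = δ ^ (γ * p) := by rw [← Real.rpow_mul hδ0.le, neg_mul_neg]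
  -- η, K
  set η : ℝ := δ ^ θ / Real.sqrt d with hηdef
  have hη0 : 0 < η := div_pos hδθ0 hsd
  have hηd : η * Real.sqrt d = δ ^ θ := div_mul_cancel₀ _ hsd.ne'
  set K : ℕ := ⌈r / η⌉₊ with hKdef
  have hrη : r / η ≤ Real.sqrt d * δ ^ (γ * p - θ) := by
    rw [hηdef, div_div_eq_mul_div]
    rw [Real.rpow_sub hδ0, mul_comm, mul_div_assoc]
    gcongr
  have hKle : (K:ℝ) ≤ Real.sqrt d * δ ^ (γ * p - θ) + 1 := by
    have := Nat.ceil_lt_add_one (le_of_lt (div_pos hr0 hη0)) (R := ℝ)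
    linarith
  have hrK : r / η ≤ (K:ℝ) := Nat.le_ceil _
  have hδe1 : 1 ≤ δ ^ (γ * p - θ) :=
    Real.one_le_rpow_of_pos_of_le_one_of_nonpos hδ0 hδ1.le (by linarith)
  have hcnt : (2 * (K:ℝ) + 2) ≤ C * δ ^ (γ * p - θ) := by
    have hCδ : C * δ ^ (γ * p - θ) =
        2 * Real.sqrt d * δ ^ (γ * p - θ) + 4 * δ ^ (γ * p - θ) := by ring
    linarith
  -- the pieces of the cover
  have hd0' : 0 < d := by omega
  set e : EuclideanSpace ℝ (Fin d) := EuclideanSpace.single ⟨0, hd0'⟩ (1:ℝ) with hedef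
  set pair : EuclideanSpace ℝ (Fin d) → Set (EuclideanSpace ℝ (Fin d)) :=
    fun x => {x, x + δ • e} with hpairdef
  have hdiam_pair : ∀ x, diam (pair x) = δ := by
    intro x
    rw [hpairdef]
    simp only [Metric.diam_pair]
    rw [dist_eq_norm]
    simp [norm_smul, hedef, EuclideanSpace.norm_single, abs_of_pos hδ0]
  set cube : (Fin d → ℤ) → Set (EuclideanSpace ℝ (Fin d)) :=
    fun k => {x | ∀ i, (k i : ℝ) * η ≤ x i ∧ x i ≤ (k i : ℝ) * η + η} with hcubedef
  have hcube_dist : ∀ k, ∀ x ∈ cube k, ∀ y ∈ cube k, dist x y ≤ δ ^ θ := by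
    intro k x hx y hy
    rw [EuclideanSpace.dist_eq]
    have hbd : ∀ i, dist (x i) (y i) ^ 2 ≤ η ^ 2 := by
      intro i
      have h1 := Real.dist_le_of_mem_Icc (x := x i) (y := y i)
        (x' := (k i : ℝ) * η) (y' := (k i : ℝ) * η + η)
        ⟨(hx i).1, (hx i).2⟩ ⟨(hy i).1, (hy i).2⟩
      have hle : dist (x i) (y i) ≤ η := by linarith
      exact pow_le_pow_left₀ dist_nonneg hle 2
    calc Real.sqrt (∑ i, dist (x i) (y i) ^ 2)
        ≤ Real.sqrt (∑ _i : Fin d, η ^ 2) :=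
          Real.sqrt_le_sqrt (Finset.sum_le_sum fun i _ => hbd i)
      _ = Real.sqrt ((d:ℝ) * η ^ 2) := by
          rw [Finset.sum_const, Finset.card_univ, Fintype.card_fin, nsmul_eq_mul]
      _ = Real.sqrt d * η := by
          rw [Real.sqrt_mul (le_of_lt hd0), Real.sqrt_sq hη0.le]
      _ = δ ^ θ := by rw [mul_comm]; exact hηd
  set c1 : (Fin d → ℤ) → EuclideanSpace ℝ (Fin d) := fun k => WithLp.toLp 2 (fun i => (k i : ℝ) * η) with hc1def
  set c2 : (Fin d → ℤ) → EuclideanSpace ℝ (Fin d) := fun k => WithLp.toLp 2 (fun i => (k i : ℝ) * η + η) with hc2def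
  have hcorner : ∀ k : Fin d → ℤ, c1 k ∈ cube k := by
    intro k i
    have e1 : c1 k i = (k i : ℝ) * η := rfl
    exact ⟨le_of_eq e1.symm, by rw [e1]; linarith [hη0.le]⟩
  have hcorner2 : ∀ k : Fin d → ℤ, c2 k ∈ cube k := by
    intro k i
    have e2 : c2 k i = (k i : ℝ) * η + η := rfl
    exact ⟨by rw [e2]; linarith [hη0.le], le_of_eq e2⟩
  have hcube_bdd : ∀ k, Bornology.IsBounded (cube k) := by
    intro k
    apply (Metric.isBounded_closedBall (x := c1 k) (r := δ ^ θ)).subset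
    intro x hx
    exact Metric.mem_closedBall.mpr (hcube_dist k x hx _ (hcorner k))
  have hcube_diam_le : ∀ k, diam (cube k) ≤ δ ^ θ := fun k =>
    Metric.diam_le_of_forall_dist_le hδθ0.le (hcube_dist k)
  have hcube_diam_ge : ∀ k, δ ≤ diam (cube k) := by
    intro k
    have hdist : dist (c1 k) (c2 k) = δ ^ θ := by
      rw [EuclideanSpace.dist_eq]
      have heach : ∀ i : Fin d, dist (c1 k i) (c2 k i) ^ 2 = η ^ 2 := by
        intro i
        have e1 : c1 k i = (k i : ℝ) * η := rfl
        have e2 : c2 k i = (k i : ℝ) * η + η := rfl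
        rw [e1, e2, Real.dist_eq, abs_sub_comm, add_sub_cancel_left, abs_of_pos hη0]
      calc Real.sqrt (∑ i, dist (c1 k i) (c2 k i) ^ 2)
          = Real.sqrt (∑ _i : Fin d, η ^ 2) := by
            congr 1; exact Finset.sum_congr rfl fun i _ => heach i
        _ = Real.sqrt ((d:ℝ) * η ^ 2) := by
            rw [Finset.sum_const, Finset.card_univ, Fintype.card_fin, nsmul_eq_mul]
        _ = Real.sqrt d * η := by
            rw [Real.sqrt_mul (le_of_lt hd0), Real.sqrt_sq hη0.le]
        _ = δ ^ θ := by rw [mul_comm]; exact hηd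
    calc δ ≤ δ ^ θ := hδle
      _ = _ := hdist.symm
      _ ≤ diam (cube k) := Metric.dist_le_diam_of_mem (hcube_bdd k) (hcorner k) (hcorner2 k)
  -- the cover
  set A : Set (Set (EuclideanSpace ℝ (Fin d))) :=
    ⋃ i ∈ Finset.Icc 1 M, pair '' (E ∩ {x | ‖x‖ = (i : ℝ) ^ (-p)}) with hAdef
  set grid : Finset (Fin d → ℤ) :=
    Fintype.piFinset (fun _ => Finset.Icc (-(K:ℤ)-1) (K:ℤ)) with hgriddef
  set B : Set (Set (EuclideanSpace ℝ (Fin d))) := cube '' ↑grid with hBdef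
  have hAfin : A.Finite := by
    apply Set.Finite.biUnion (Finset.Icc 1 M).finite_toSet
    intro i hi
    exact ((hb i (Finset.mem_Icc.mp hi).1).1.image _)
  have hBfin : B.Finite := grid.finite_toSet.image _
  refine ⟨A ∪ B, (hAfin.union hBfin).countable, ?_, ?_, ?_⟩
  · -- cover
    intro x hx
    obtain ⟨n, hn1, hnorm⟩ := hE hx
    rcases le_or_gt n M with hcase | hcase
    · refine ⟨pair x, Or.inl ?_, ?_⟩
      · exact Set.mem_biUnion (Finset.mem_Icc.mpr ⟨hn1, hcase⟩)
          (Set.mem_image_of_mem _ ⟨hx, hnorm⟩)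
      · rw [hpairdef]; exact Set.mem_insert _ _
    · -- inner part
      have hxr : ‖x‖ ≤ r := by
        rw [hnorm, hrdef, Real.rpow_neg (by positivity), Real.rpow_neg hM0.le]
        exact inv_anti₀ (Real.rpow_pos_of_pos hM0 p)
          (Real.rpow_le_rpow hM0.le (by exact_mod_cast hcase.le) hp.le)
      set k : Fin d → ℤ := fun i => ⌊x i / η⌋ with hkdef
      have hki : ∀ i, k i ∈ Finset.Icc (-(K:ℤ)-1) (K:ℤ) := by
        intro i
        have habs : |x i| ≤ r := le_trans (aux_coord_le_norm x i) hxr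
        have h1 : x i / η ≤ (K:ℝ) :=
          le_trans ((div_le_div_iff_of_pos_right hη0).mpr (le_trans (le_abs_self _) habs)) hrK
        have h2 : -(K:ℝ) ≤ x i / η := by
          have hneg : -r ≤ x i := by linarith [neg_abs_le (x i)]
          calc -(K:ℝ) ≤ -(r/η) := neg_le_neg hrK
            _ = (-r)/η := (neg_div _ _).symm
            _ ≤ x i / η := (div_le_div_iff_of_pos_right hη0).mpr hneg
        rw [Finset.mem_Icc]
        constructor
        · apply Int.le_floor.mpr
          push_cast
          linarith
        · have hfl := Int.floor_le_floor h1
          rwa [Int.floor_natCast] at hfl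
      have hxcube : x ∈ cube k := by
        intro i
        constructor
        · calc (k i : ℝ) * η ≤ (x i / η) * η :=
              mul_le_mul_of_nonneg_right (Int.floor_le _) hη0.le
            _ = x i := div_mul_cancel₀ _ hη0.ne'
        · have hlt := (Int.lt_floor_add_one (x i / η)).le
          calc x i = (x i / η) * η := (div_mul_cancel₀ _ hη0.ne').symm
            _ ≤ ((k i : ℝ) + 1) * η := mul_le_mul_of_nonneg_right hlt hη0.le
            _ = (k i : ℝ) * η + η := by ring
      exact ⟨cube k, Or.inr (Set.mem_image_of_mem _
        (Finset.mem_coe.mpr (Fintype.mem_piFinset.mpr hki))), hxcube⟩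
  · -- diameters
    intro U hU
    rcases hU with hU | hU
    · rw [hAdef] at hU
      simp only [Set.mem_iUnion, Set.mem_image] at hU
      obtain ⟨i, hi, x, hxmem, rfl⟩ := hU
      rw [hdiam_pair]
      exact ⟨le_rfl, hδle⟩
    · obtain ⟨k, hk, rfl⟩ := hU
      exact ⟨hcube_diam_ge k, hcube_diam_le k⟩
  · -- the sum
    have hε2 : 0 < ε / 2 := lt_of_lt_of_le (by positivity) h3
    have hA_i : ∀ i ∈ Finset.Icc 1 M,
        (∑' (U : ↑(pair '' (E ∩ {x | ‖x‖ = (i:ℝ)^(-p)}))),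
          ENNReal.ofReal (diam (U : Set (EuclideanSpace ℝ (Fin d))) ^ t))
          ≤ (b i : ENNReal) * ENNReal.ofReal (δ ^ t) := by
      intro i hi
      have hfin := (hb i (Finset.mem_Icc.mp hi).1).1
      have hcard := (hb i (Finset.mem_Icc.mp hi).1).2
      have hle := aux_tsum_le_ncard (hfin.image pair)
        (f := fun U => ENNReal.ofReal (diam U ^ t)) (c := ENNReal.ofReal (δ ^ t)) ?_
      · refine hle.trans (mul_le_mul_left ?_ _)
        exact_mod_cast Nat.cast_le.mpr ((Set.ncard_image_le hfin).trans_eq hcard)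
      · rintro U ⟨x, hx, rfl⟩
        simp only [hdiam_pair]
        exact le_rfl
    have hA_num : (∑ i ∈ Finset.Icc 1 M, (b i : ENNReal) * ENNReal.ofReal (δ ^ t))
        ≤ ENNReal.ofReal (ε / 2) := by
      calc (∑ i ∈ Finset.Icc 1 M, (b i : ENNReal) * ENNReal.ofReal (δ ^ t))
          = ∑ i ∈ Finset.Icc 1 M, ENNReal.ofReal ((b i : ℝ) * δ ^ t) := by
            refine Finset.sum_congr rfl fun i _ => ?_
            rw [ENNReal.ofReal_mul (by positivity), ENNReal.ofReal_natCast]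
        _ = ENNReal.ofReal (∑ i ∈ Finset.Icc 1 M, (b i : ℝ) * δ ^ t) :=
            (ENNReal.ofReal_sum_of_nonneg (fun i _ => by positivity)).symm
        _ = ENNReal.ofReal ((∑ i ∈ Finset.Icc 1 M, (b i : ℝ)) * δ ^ t) := by
            rw [← Finset.sum_mul]
        _ ≤ ENNReal.ofReal (ε / 2) := by
            apply ENNReal.ofReal_le_ofReal
            have hBM : (∑ i ∈ Finset.Icc 1 M, (b i : ℝ)) ≤ (M : ℝ) ^ l :=
              hBle M hMN.1 hMN.2
            have hMl : (M : ℝ) ^ l ≤ 2 ^ l * δ ^ (-(γ * l)) := by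
              calc (M : ℝ) ^ l ≤ (2 * δ ^ (-γ)) ^ l :=
                  Real.rpow_le_rpow hM0.le hMle hl.le
                _ = 2 ^ l * (δ ^ (-γ)) ^ l := Real.mul_rpow (by norm_num) hxpos.le
                _ = 2 ^ l * δ ^ (-(γ * l)) := by
                    rw [← Real.rpow_mul hδ0.le, neg_mul]
            calc (∑ i ∈ Finset.Icc 1 M, (b i : ℝ)) * δ ^ t
                ≤ 2 ^ l * δ ^ (-(γ * l)) * δ ^ t :=
                  mul_le_mul_of_nonneg_right (hBM.trans hMl)
                    (Real.rpow_nonneg hδ0.le t)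
              _ = 2 ^ l * δ ^ (t - γ * l) := by
                  rw [mul_assoc, ← Real.rpow_add hδ0]
                  rw [show -(γ * l) + t = t - γ * l by ring]
              _ ≤ ε / 2 := h3
    have hB_le : (∑' (U : ↑B),
        ENNReal.ofReal (diam (U : Set (EuclideanSpace ℝ (Fin d))) ^ t))
        ≤ (((2 * K + 2) ^ d : ℕ) : ENNReal) * ENNReal.ofReal ((δ ^ θ) ^ t) := by
      have hle := aux_tsum_le_ncard hBfin
        (f := fun U => ENNReal.ofReal (diam U ^ t))
        (c := ENNReal.ofReal ((δ ^ θ) ^ t)) ?_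
      · refine hle.trans (mul_le_mul_left ?_ _)
        have h1 : B.ncard ≤ grid.card := by
          rw [hBdef]
          exact (Set.ncard_image_le grid.finite_toSet).trans_eq (Set.ncard_coe_finset _)
        have h2 : grid.card = (2 * K + 2) ^ d := by
          rw [hgriddef, Fintype.card_piFinset, Finset.prod_const, Finset.card_univ,
            Fintype.card_fin]
          congr 1
          rw [Int.card_Icc]
          omega
        exact_mod_cast Nat.cast_le.mpr (h1.trans_eq h2)
      · rintro U ⟨k, hk, rfl⟩
        exact ENNReal.ofReal_le_ofReal
          (Real.rpow_le_rpow diam_nonneg (hcube_diam_le k) ht0)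
    have hB_num : (((2 * K + 2) ^ d : ℕ) : ENNReal) * ENNReal.ofReal ((δ ^ θ) ^ t)
        ≤ ENNReal.ofReal (ε / 2) := by
      have heq : (((2 * K + 2) ^ d : ℕ) : ENNReal) * ENNReal.ofReal ((δ ^ θ) ^ t)
          = ENNReal.ofReal ((2 * (K : ℝ) + 2) ^ d * (δ ^ θ) ^ t) := by
        rw [ENNReal.ofReal_mul (by positivity), ← ENNReal.ofReal_natCast ((2 * K + 2) ^ d)]
        congr 2
        push_cast
        ring
      rw [heq]
      apply ENNReal.ofReal_le_ofReal
      have hpow : (2 * (K : ℝ) + 2) ^ d ≤ (C * δ ^ (γ * p - θ)) ^ d :=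
        pow_le_pow_left₀ (by positivity) hcnt d
      have hstep : (2 * (K : ℝ) + 2) ^ d * (δ ^ θ) ^ t
          ≤ (C * δ ^ (γ * p - θ)) ^ d * (δ ^ θ) ^ t :=
        mul_le_mul_of_nonneg_right hpow (by positivity)
      refine hstep.trans ?_
      have hexp : (C * δ ^ (γ * p - θ)) ^ d * (δ ^ θ) ^ t
          = C ^ d * δ ^ ((γ * p - θ) * d + θ * t) := by
        rw [mul_pow, ← Real.rpow_natCast (δ ^ (γ * p - θ)) d, ← Real.rpow_mul hδ0.le,
          ← Real.rpow_mul hδ0.le, mul_assoc, ← Real.rpow_add hδ0]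
      rw [hexp]
      exact h4
    calc ∑' (U : ↑(A ∪ B)), ENNReal.ofReal (diam (U : Set (EuclideanSpace ℝ (Fin d))) ^ t)
        ≤ (∑' (U : ↑A), ENNReal.ofReal (diam (U : Set (EuclideanSpace ℝ (Fin d))) ^ t))
          + ∑' (U : ↑B), ENNReal.ofReal (diam (U : Set (EuclideanSpace ℝ (Fin d))) ^ t) :=
          ENNReal.tsum_union_le (fun U => ENNReal.ofReal (diam U ^ t)) A B
      _ ≤ ENNReal.ofReal (ε / 2) + ENNReal.ofReal (ε / 2) := by
          apply add_le_add
          · refine le_trans (le_trans ?_ (Finset.sum_le_sum hA_i)) hA_num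
            rw [hAdef]
            exact ENNReal.tsum_biUnion_le (fun U => ENNReal.ofReal (diam U ^ t)) _ _
          · exact le_trans hB_le hB_num
      _ = ENNReal.ofReal ε := by
          rw [← ENNReal.ofReal_add hε2.le hε2.le, add_halves]

theorem stmt13 (d : ℕ) (hd : 2 ≤ d) (p : ℝ) (hp : 0 < p)
    (E : Set (EuclideanSpace ℝ (Fin d))) (hE : E ⊆ concentric d p) (b : ℕ → ℕ)
    (hb : ∀ i : ℕ, 1 ≤ i → (E ∩ {x | ‖x‖ = (i : ℝ) ^ (-p)}).Finite ∧
      (E ∩ {x | ‖x‖ = (i : ℝ) ^ (-p)}).ncard = b i) :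
    (∀ l : ℝ, 0 < l →
      limsup (fun n : ℕ =>
          ((Real.log (∑ i ∈ Finset.Icc 1 n, (b i : ℝ)) / Real.log n : ℝ) : EReal)) atTop
        < (l : EReal) →
      ∀ θ : ℝ, 0 < θ → θ ≤ 1 → updim θ E ≤ θ * l * d / (p * d + θ * l)) ∧
    (limsup (fun n : ℕ =>
        ((Real.log (∑ i ∈ Finset.Icc 1 n, (b i : ℝ)) / Real.log n : ℝ) : EReal)) atTop < ⊤ →
      Tendsto (fun θ : ℝ => updim θ E) (nhdsWithin 0 (Set.Ioi 0)) (nhds 0)) := by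
  have hd0 : (0:ℝ) < d := by
    have : (2:ℝ) ≤ (d:ℝ) := by exact_mod_cast hd
    linarith
  have key : ∀ l : ℝ, 0 < l →
      limsup (fun n : ℕ =>
          ((Real.log (∑ i ∈ Finset.Icc 1 n, (b i : ℝ)) / Real.log n : ℝ) : EReal)) atTop
        < (l : EReal) →
      ∀ θ : ℝ, 0 < θ → θ ≤ 1 → updim θ E ≤ θ * l * d / (p * d + θ * l) := by
    intro l hl hlim θ hθ0 hθ1
    have hpd : (0:ℝ) < p * d := by positivity
    have hdenom : (0:ℝ) < p * d + θ * l := by positivity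
    have hs0 : 0 < θ * l * (d:ℝ) / (p * d + θ * l) := by positivity
    obtain ⟨N₀, hN₀⟩ := Filter.eventually_atTop.mp (Filter.eventually_lt_of_limsup_lt hlim)
    have hBle : ∀ n : ℕ, N₀ ≤ n → 2 ≤ n →
        (∑ i ∈ Finset.Icc 1 n, (b i : ℝ)) ≤ (n:ℝ) ^ l := by
      intro n h1 h2
      have hn2 : (2:ℝ) ≤ (n:ℝ) := by exact_mod_cast h2
      have hlogn : 0 < Real.log n := Real.log_pos (by linarith)
      have hlt := hN₀ n h1
      rw [EReal.coe_lt_coe_iff] at hlt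
      set Bn := ∑ i ∈ Finset.Icc 1 n, (b i : ℝ) with hBn
      have hBn0 : 0 ≤ Bn := Finset.sum_nonneg fun i _ => by positivity
      rcases le_or_gt Bn 1 with hc | hc
      · exact hc.trans (Real.one_le_rpow (by linarith) hl.le)
      · have hlog : Real.log Bn < l * Real.log n := by
          rw [div_lt_iff₀ hlogn] at hlt
          linarith
        exact ((Real.lt_rpow_iff_log_lt (by linarith) (by linarith)).mpr hlog).le
    suffices H : ∀ t : ℝ, θ * l * (d:ℝ) / (p * d + θ * l) < t → updim θ E ≤ t by
      by_contra hcon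
      push_neg at hcon
      have := H ((θ * l * (d:ℝ) / (p * d + θ * l) + updim θ E) / 2) (by linarith)
      linarith
    intro t ht
    have ht0 : 0 < t := hs0.trans ht
    have hst : θ * l * (d:ℝ) < t * (p * d + θ * l) := by
      have := (div_lt_iff₀ hdenom).mp ht
      linarith
    have h1 : θ * ((d:ℝ) - t) / (p * d) < t / l := by
      rw [div_lt_div_iff₀ hpd hl]
      nlinarith
    have h2 : θ * ((d:ℝ) - t) / (p * d) < θ / p := by
      rw [div_lt_div_iff₀ hpd hp]
      nlinarith [mul_pos (mul_pos hθ0 hp) ht0]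
    set a := max 0 (θ * ((d:ℝ) - t) / (p * d)) with ha
    set bb := min (t / l) (θ / p) with hbb
    have hab : a < bb := max_lt (lt_min (by positivity) (by positivity)) (lt_min h1 h2)
    set γ := (a + bb) / 2 with hγ
    have ha0 : 0 ≤ a := le_max_left _ _
    have hγa : a < γ := by rw [hγ]; linarith
    have hγb : γ < bb := by rw [hγ]; linarith
    have hγ0 : 0 < γ := lt_of_le_of_lt ha0 hγa
    have hγt : γ * l < t := (lt_div_iff₀ hl).mp (hγb.trans_le (min_le_left _ _))
    have hγθ : γ * p < θ := (lt_div_iff₀ hp).mp (hγb.trans_le (min_le_right _ _))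
    have hγd : θ * ((d:ℝ) - t) < γ * (p * d) :=
      (div_lt_iff₀ hpd).mp ((le_max_right 0 _).trans_lt hγa)
    have hα0 : 0 < t - γ * l := by linarith
    have hβ0 : 0 < (γ * p - θ) * (d:ℝ) + θ * t := by nlinarith
    have hC0 : (0:ℝ) < 2 * Real.sqrt d + 4 := by positivity
    have hmem : t ∈ {s : ℝ | 0 ≤ s ∧ ∀ ε : ℝ, 0 < ε → ∃ δ₀ : ℝ, 0 < δ₀ ∧
        ∀ δ : ℝ, 0 < δ → δ < δ₀ →
        ∃ 𝒰 : Set (Set (EuclideanSpace ℝ (Fin d))), 𝒰.Countable ∧ E ⊆ ⋃₀ 𝒰 ∧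
          (∀ U ∈ 𝒰, δ ≤ diam U ∧ diam U ≤ δ ^ θ) ∧
          ∑' U : 𝒰, ENNReal.ofReal (diam (U : Set (EuclideanSpace ℝ (Fin d))) ^ s)
            ≤ ENNReal.ofReal ε} := by
      refine ⟨ht0.le, ?_⟩
      intro ε hε
      have htend : ∀ q : ℝ, 0 < q →
          Tendsto (fun δ : ℝ => δ ^ q) (nhdsWithin 0 (Set.Ioi 0)) (nhds 0) := by
        intro q hq
        have h := (Real.continuousAt_rpow_const 0 q (Or.inr hq.le)).tendsto
        rw [Real.zero_rpow hq.ne'] at h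
        exact h.mono_left nhdsWithin_le_nhds
      have ev1 : ∀ᶠ δ in nhdsWithin (0:ℝ) (Set.Ioi 0), δ < 1 := by
        filter_upwards [Ioo_mem_nhdsGT one_pos] with δ hδ using hδ.2
      have ev2 : ∀ᶠ δ in nhdsWithin (0:ℝ) (Set.Ioi 0), ((N₀:ℝ) + 2) ≤ δ ^ (-γ) := by
        have hpos : (0:ℝ) < ((N₀:ℝ) + 2)⁻¹ := by positivity
        filter_upwards [(htend γ hγ0).eventually (gt_mem_nhds hpos), self_mem_nhdsWithin]
          with δ h hδ
        have hδ0 : (0:ℝ) < δ := hδ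
        have hx : 0 < δ ^ γ := Real.rpow_pos_of_pos hδ0 γ
        rw [Real.rpow_neg hδ0.le]
        calc ((N₀:ℝ) + 2) = (((N₀:ℝ) + 2)⁻¹)⁻¹ := (inv_inv _).symm
          _ ≤ (δ ^ γ)⁻¹ := inv_anti₀ hx h.le
      have ev3 : ∀ᶠ δ in nhdsWithin (0:ℝ) (Set.Ioi 0),
          (2:ℝ) ^ l * δ ^ (t - γ * l) ≤ ε / 2 := by
        have h2l : (0:ℝ) < (2:ℝ) ^ l := by positivity
        have hc : (0:ℝ) < ε / (2 * 2 ^ l) := by positivity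
        filter_upwards [(htend _ hα0).eventually (gt_mem_nhds hc)] with δ h
        calc (2:ℝ) ^ l * δ ^ (t - γ * l) ≤ (2:ℝ) ^ l * (ε / (2 * 2 ^ l)) :=
            mul_le_mul_of_nonneg_left h.le h2l.le
          _ = ε / 2 := by field_simp
      have ev4 : ∀ᶠ δ in nhdsWithin (0:ℝ) (Set.Ioi 0),
          (2 * Real.sqrt d + 4) ^ d * δ ^ ((γ * p - θ) * d + θ * t) ≤ ε / 2 := by
        have hCd : (0:ℝ) < (2 * Real.sqrt d + 4) ^ d := by positivity
        have hc : (0:ℝ) < ε / (2 * (2 * Real.sqrt d + 4) ^ d) := by positivity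
        filter_upwards [(htend _ hβ0).eventually (gt_mem_nhds hc)] with δ h
        calc (2 * Real.sqrt d + 4) ^ d * δ ^ ((γ * p - θ) * d + θ * t)
            ≤ (2 * Real.sqrt d + 4) ^ d * (ε / (2 * (2 * Real.sqrt d + 4) ^ d)) :=
            mul_le_mul_of_nonneg_left h.le hCd.le
          _ = ε / 2 := by field_simp
      obtain ⟨δ₀, hδ₀, hsub⟩ := mem_nhdsGT_iff_exists_Ioo_subset.mp
        (ev1.and (ev2.and (ev3.and ev4)))
      refine ⟨δ₀, hδ₀, ?_⟩
      intro δ h0 hlt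
      obtain ⟨h1', h2', h3', h4'⟩ := hsub ⟨h0, hlt⟩
      exact aux_cover d hd p hp E hE b hb l hl N₀ hBle θ t γ hθ0 hθ1 ht0.le hγ0 hγt hγθ
        δ ε h0 h1' h2' h3' h4'
    unfold updim
    exact csInf_le ⟨0, fun x hx => hx.1⟩ hmem
  refine ⟨key, ?_⟩
  intro hlim
  obtain ⟨x, hLx, hxtop⟩ := exists_between hlim
  have hxbot : (⊥ : EReal) < x := lt_of_le_of_lt bot_le hLx
  lift x to ℝ using ⟨hxtop.ne, hxbot.ne'⟩
  set l := max 1 x with hldef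
  have hl : (0:ℝ) < l := lt_of_lt_of_le one_pos (le_max_left _ _)
  have hLl : limsup (fun n : ℕ =>
      ((Real.log (∑ i ∈ Finset.Icc 1 n, (b i : ℝ)) / Real.log n : ℝ) : EReal)) atTop
      < (l : EReal) := by
    refine hLx.trans_le ?_
    exact_mod_cast EReal.coe_le_coe_iff.mpr (le_max_right 1 x)
  have hub := key l hl hLl
  have hlow : ∀ θ : ℝ, 0 ≤ updim θ E := by
    intro θ
    unfold updim
    exact Real.sInf_nonneg fun x hx => hx.1
  have hupper : Tendsto (fun θ : ℝ => θ * l * (d:ℝ) / (p * d + θ * l))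
      (nhdsWithin 0 (Set.Ioi 0)) (nhds 0) := by
    have hne : p * (d:ℝ) + 0 * l ≠ 0 := by
      rw [zero_mul, add_zero]
      positivity
    have h1 : Tendsto (fun θ : ℝ => θ * l * (d:ℝ)) (nhds 0) (nhds (0 * l * (d:ℝ))) :=
      ((continuous_id.mul continuous_const).mul continuous_const).tendsto 0
    have h2 : Tendsto (fun θ : ℝ => p * (d:ℝ) + θ * l) (nhds 0)
        (nhds (p * (d:ℝ) + 0 * l)) :=
      (continuous_const.add (continuous_id.mul continuous_const)).tendsto 0
    have h3 := h1.div h2 hne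
    simp only [zero_mul, add_zero, zero_div] at h3
    exact h3.mono_left nhdsWithin_le_nhds
  apply tendsto_of_tendsto_of_tendsto_of_le_of_le' tendsto_const_nhds hupper
  · exact Filter.Eventually.of_forall fun θ => hlow θ
  · filter_upwards [Ioo_mem_nhdsGT one_pos] with θ hθ
    exact hub θ hθ.1 hθ.2.le
end

section
/- Let d ≥ 2 be an integer, p > 0, and let E ⊆ C_p^d be a set such that for each i ∈ ℕ the intersection of E with the sphere of radius i^{-p} centred at the origin is a finite set of cardinality b_i. If l > 0 satisfies liminf_{n→∞} log(Σ_{i=1}^{n} b_i)/log(n) < l, then for all θ ∈ (0,1], lodim_θ(E) ≤ θ·l·d/(p·d + θ·l). In particular, if liminf_{n→∞} log(Σ_{i=1}^{n} b_i)/log(n) < ∞, then lodim_θ(E) → 0 as θ → 0⁺, so the lower intermediate dimensions of E are continuous at zero. -/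
open Set Metric Filter

section Helpers

lemma tsum_subtype_le_of_finite' {α : Type*} {S : Set α} (hS : S.Finite) (f : α → ENNReal)
    (c : ENNReal) (h : ∀ x ∈ S, f x ≤ c) : ∑' x : S, f x ≤ S.ncard * c := by
  have := hS.fintype
  rw [tsum_fintype]
  calc ∑ x : S, f x ≤ ∑ _x : S, c := Finset.sum_le_sum (fun x _ => h x x.2)
  _ = (Fintype.card S) • c := by rw [Finset.sum_const, Finset.card_univ]
  _ = S.ncard * c := by
      rw [nsmul_eq_mul, ← Nat.card_coe_set_eq, Nat.card_eq_fintype_card]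

lemma diam_cb' {X : Type*} [NormedAddCommGroup X] [NormedSpace ℝ X] [Nontrivial X]
    (x : X) {r : ℝ} (hr : 0 ≤ r) : diam (closedBall x r) = 2 * r := by
  refine le_antisymm (diam_closedBall hr) ?_
  obtain ⟨v, hv⟩ := exists_norm_eq X (zero_le_one (α := ℝ))
  have h1 : x + r • v ∈ closedBall x r := by
    simp [mem_closedBall, dist_eq_norm, norm_smul, hv, abs_of_nonneg hr]
  have h2 : x - r • v ∈ closedBall x r := by
    simp [mem_closedBall, dist_eq_norm, norm_smul, hv, abs_of_nonneg hr]
  have hle := dist_le_diam_of_mem (isBounded_closedBall) h1 h2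
  have hd : dist (x + r • v) (x - r • v) = 2 * r := by
    rw [dist_eq_norm]
    have h3 : x + r • v - (x - r • v) = (2*r) • v := by module
    rw [h3, norm_smul, hv, mul_one, Real.norm_of_nonneg (by linarith)]
  linarith

lemma pow_add_five_le (d : ℕ) {a : ℝ} (ha : 0 ≤ a) : (a + 5) ^ d ≤ (2*a)^d + 10^d := by
  rcases le_total a 5 with h | h
  · calc (a+5)^d ≤ 10^d := pow_le_pow_left₀ (by linarith) (by linarith) d
    _ ≤ (2*a)^d + 10^d := le_add_of_nonneg_left (by positivity)
  · calc (a+5)^d ≤ (2*a)^d := pow_le_pow_left₀ (by linarith) (by linarith) d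
    _ ≤ (2*a)^d + 10^d := le_add_of_nonneg_right (by positivity)

end Helpers

lemma grid_cover (d : ℕ) {r ρ : ℝ} (hρ : 0 < ρ) (hr : 0 < r) :
    ∃ 𝒱 : Finset (EuclideanSpace ℝ (Fin d)),
      (closedBall (0 : EuclideanSpace ℝ (Fin d)) r ⊆ ⋃ c ∈ 𝒱, closedBall c ρ) ∧
      (𝒱.card : ℝ) ≤ (2 * Real.sqrt d * r / ρ + 5) ^ d := by
  classical
  set sd : ℝ := Real.sqrt d with hsd
  have hsd0 : 0 ≤ sd := Real.sqrt_nonneg _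
  rcases Nat.eq_zero_or_pos d with hd0 | hdpos
  · subst hd0
    refine ⟨{0}, ?_, by norm_num⟩
    intro x _
    refine Set.mem_biUnion (Finset.mem_singleton_self _) ?_
    simp only [mem_closedBall]
    have : dist x (0 : EuclideanSpace ℝ (Fin 0)) = 0 := by
      rw [EuclideanSpace.dist_eq]; simp
    linarith
  have hsd1 : 1 ≤ sd := by
    rw [hsd, show (1:ℝ) = Real.sqrt 1 by simp]
    exact Real.sqrt_le_sqrt (by exact_mod_cast hdpos)
  have hsd0' : 0 < sd := lt_of_lt_of_le one_pos hsd1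
  set ρ' : ℝ := ρ / sd with hρ'
  have hρ'0 : 0 < ρ' := div_pos hρ hsd0'
  set N : ℕ := ⌈r / ρ'⌉₊ + 1 with hN
  have hrρ' : 0 ≤ r / ρ' := by positivity
  have hNr : r / ρ' + 1 ≤ (N : ℝ) := by
    push_cast [hN]
    have := Nat.le_ceil (r / ρ')
    linarith
  have hNr2 : (N : ℝ) ≤ r / ρ' + 2 := by
    push_cast [hN]
    have := (Nat.ceil_lt_add_one hrρ').le
    linarith
  set K : Finset ℤ := Finset.Icc (-(N : ℤ)) (N : ℤ) with hK
  have hKcard : (K.card : ℝ) = 2 * N + 1 := by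
    rw [hK, Int.card_Icc]
    have h : ((N:ℤ) + 1 - -(N:ℤ)).toNat = 2 * N + 1 := by omega
    rw [h]; push_cast; ring
  set ctr : ((Fin d) → ℤ) → EuclideanSpace ℝ (Fin d) := fun k => WithLp.toLp 2 (fun i => ρ' * k i) with hctr
  refine ⟨(Fintype.piFinset fun _ : Fin d => K).image ctr, ?_, ?_⟩
  · intro x hx
    simp only [mem_closedBall, dist_zero_right] at hx
    have hxi : ∀ i, |x i| ≤ r := by
      intro i
      have h2 : (x i)^2 ≤ ∑ j, ‖x j‖^2 := by
        have := Finset.single_le_sum (f := fun j => ‖x j‖^2)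
          (fun j _ => by positivity) (Finset.mem_univ i)
        simpa [Real.norm_eq_abs, sq_abs] using this
      have h1 : |x i| ≤ ‖x‖ := by
        rw [EuclideanSpace.norm_eq, show |x i| = Real.sqrt ((x i)^2) by rw [Real.sqrt_sq_eq_abs]]
        exact Real.sqrt_le_sqrt h2
      linarith
    set k : (Fin d) → ℤ := fun i => ⌊x i / ρ'⌋ with hk
    have hxiρ : ∀ i, -(r/ρ') ≤ x i / ρ' ∧ x i / ρ' ≤ r / ρ' := by
      intro i
      have h := abs_le.mp (hxi i)
      constructor
      · rw [show -(r/ρ') = (-r)/ρ' by ring]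
        gcongr; exact h.1
      · gcongr; exact h.2
    have hkmem : k ∈ Fintype.piFinset fun _ : Fin d => K := by
      rw [Fintype.mem_piFinset]
      intro i
      rw [hK, Finset.mem_Icc]
      have hup : (⌊x i / ρ'⌋ : ℝ) ≤ (N:ℝ) := (Int.floor_le _).trans ((hxiρ i).2.trans (by linarith))
      have hlo : -(N:ℝ) < (⌊x i / ρ'⌋ : ℝ) := by
        have := Int.sub_one_lt_floor (x i / ρ')
        have := (hxiρ i).1
        linarith
      constructor
      · exact_mod_cast hlo.le
      · exact_mod_cast hup
    refine Set.mem_biUnion (Finset.mem_image_of_mem ctr hkmem) ?_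
    rw [mem_closedBall, EuclideanSpace.dist_eq]
    have hbd : ∀ i, dist (x i) (ctr k i) ^ 2 ≤ ρ' ^ 2 := by
      intro i
      have h1 : (ctr k : EuclideanSpace ℝ (Fin d)) i = ρ' * (⌊x i / ρ'⌋ : ℝ) := rfl
      rw [Real.dist_eq, h1]
      have h2 : ρ' * ⌊x i / ρ'⌋ ≤ x i := by
        rw [mul_comm, ← le_div_iff₀ hρ'0]; exact Int.floor_le _
      have h3 : x i < ρ' * (⌊x i / ρ'⌋ + 1) := by
        rw [mul_comm, ← div_lt_iff₀ hρ'0]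
        have := Int.lt_floor_add_one (x i / ρ'); push_cast; linarith
      have h4 : |x i - ρ' * ⌊x i / ρ'⌋| ≤ ρ' := by
        rw [abs_le]; constructor <;> nlinarith
      exact pow_le_pow_left₀ (abs_nonneg _) h4 2
    calc Real.sqrt (∑ i, dist (x i) (ctr k i)^2) ≤ Real.sqrt (∑ _i : Fin d, ρ'^2) :=
          Real.sqrt_le_sqrt (Finset.sum_le_sum fun i _ => hbd i)
    _ = Real.sqrt (d * ρ'^2) := by rw [Finset.sum_const, Finset.card_univ]; simp [nsmul_eq_mul]
    _ = sd * ρ' := by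
        rw [Real.sqrt_mul (by positivity), Real.sqrt_sq hρ'0.le]
    _ = ρ := by rw [hρ']; field_simp
  · have h1 : ((Fintype.piFinset fun _ : Fin d => K).image ctr).card ≤ K.card ^ d := by
      calc ((Fintype.piFinset fun _ : Fin d => K).image ctr).card
          ≤ (Fintype.piFinset fun _ : Fin d => K).card := Finset.card_image_le
      _ = K.card ^ d := by rw [Fintype.card_piFinset]; simp
    have h2 : (K.card : ℝ) ≤ 2 * sd * r / ρ + 5 := by
      rw [hKcard]
      have : (N:ℝ) ≤ r * sd / ρ + 2 := by
        rw [hρ'] at hNr2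
        calc (N:ℝ) ≤ r / (ρ / sd) + 2 := hNr2
        _ = r * sd / ρ + 2 := by rw [div_div_eq_mul_div]
      have e : 2*sd*r/ρ = 2*(r*sd/ρ) := by ring
      linarith
    calc (((Fintype.piFinset fun _ : Fin d => K).image ctr).card : ℝ)
        ≤ ((K.card : ℝ)) ^ d := by exact_mod_cast h1
    _ ≤ (2 * sd * r / ρ + 5) ^ d := by
        apply pow_le_pow_left₀ (Nat.cast_nonneg _) h2

section KeyNoHelpers
variable {d : ℕ}

set_option maxHeartbeats 2000000 in
lemma key_lemma (d : ℕ) (hd : 2 ≤ d) (p : ℝ) (hp : 0 < p)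
    (E : Set (EuclideanSpace ℝ (Fin d)))
    (hE : E ⊆ {x | ∃ n : ℕ, 1 ≤ n ∧ ‖x‖ = (n : ℝ) ^ (-p)}) (b : ℕ → ℕ)
    (hb : ∀ i : ℕ, 1 ≤ i → (E ∩ {x | ‖x‖ = (i : ℝ) ^ (-p)}).Finite ∧
      (E ∩ {x | ‖x‖ = (i : ℝ) ^ (-p)}).ncard = b i)
    (l : ℝ) (hl : 0 < l)
    (hfreq : ∃ᶠ n : ℕ in atTop, (∑ i ∈ Finset.Icc 1 n, (b i : ℝ)) ≤ (n : ℝ) ^ l)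
    (θ : ℝ) (hθ0 : 0 < θ) (hθ1 : θ ≤ 1) (s : ℝ)
    (hs0 : θ * l * d / (p * d + θ * l) < s) (hsd : s < d) :
    0 ≤ s ∧ ∀ ε : ℝ, 0 < ε → ∀ δ₀ : ℝ, 0 < δ₀ → ∃ δ : ℝ, 0 < δ ∧ δ < δ₀ ∧
      ∃ 𝒰 : Set (Set (EuclideanSpace ℝ (Fin d))), 𝒰.Countable ∧ E ⊆ ⋃₀ 𝒰 ∧
        (∀ U ∈ 𝒰, δ ≤ diam U ∧ diam U ≤ δ ^ θ) ∧
        ∑' U : 𝒰, ENNReal.ofReal (diam (U : Set (EuclideanSpace ℝ (Fin d))) ^ s)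
          ≤ ENNReal.ofReal ε := by
  classical
  have hd0 : (0:ℝ) < d := by exact_mod_cast lt_of_lt_of_le two_pos hd
  have hden : 0 < p * d + θ * l := by positivity
  have hspos : 0 < s := lt_of_le_of_lt (by positivity) hs0
  have hds : 0 < (d:ℝ) - s := by linarith
  -- choose β
  have hβex : l / s < p * d / (θ * ((d:ℝ) - s)) := by
    rw [div_lt_div_iff₀ hspos (by positivity)]
    rw [div_lt_iff₀ hden] at hs0
    nlinarith
  obtain ⟨β, hβ1, hβ2⟩ := exists_between hβex
  have hβ0 : 0 < β := lt_trans (by positivity) hβ1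
  have he1 : 0 < β * s - l := by
    rw [div_lt_iff₀ hspos] at hβ1; linarith
  have he2 : 0 < p * d - β * (θ * ((d:ℝ) - s)) := by
    rw [lt_div_iff₀ (by positivity)] at hβ2; linarith
  set sd : ℝ := Real.sqrt d with hsd
  set A : ℝ := (8 * sd) ^ d with hA
  set B : ℝ := 10 ^ d with hB
  set e1 : ℝ := β * s - l with he1d
  set e2 : ℝ := p * d - β * (θ * ((d:ℝ) - s)) with he2d
  set g : ℕ → ℝ := fun n =>
    (n:ℝ) ^ (-e1) + A * (n:ℝ) ^ (-e2) + B * (n:ℝ) ^ (-(β * θ * s)) with hg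
  have hgto : Tendsto g atTop (nhds 0) := by
    have h1 : Tendsto (fun n : ℕ => (n:ℝ) ^ (-e1)) atTop (nhds 0) :=
      (tendsto_rpow_neg_atTop he1).comp tendsto_natCast_atTop_atTop
    have h2 : Tendsto (fun n : ℕ => (n:ℝ) ^ (-e2)) atTop (nhds 0) :=
      (tendsto_rpow_neg_atTop he2).comp tendsto_natCast_atTop_atTop
    have h3 : Tendsto (fun n : ℕ => (n:ℝ) ^ (-(β * θ * s))) atTop (nhds 0) :=
      (tendsto_rpow_neg_atTop (by positivity)).comp tendsto_natCast_atTop_atTop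
    have := (h1.add ((h2.const_mul A).add (h3.const_mul B)))
    simpa [hg, add_assoc] using this
  refine ⟨hspos.le, ?_⟩
  intro ε hε δ₀ hδ₀
  have hδto : Tendsto (fun n : ℕ => (n:ℝ) ^ (-β)) atTop (nhds 0) :=
    (tendsto_rpow_neg_atTop hβ0).comp tendsto_natCast_atTop_atTop
  have hev : ∀ᶠ n : ℕ in atTop, (n:ℝ) ^ (-β) < δ₀ ∧ 2 ≤ n ∧ g n ≤ ε := by
    filter_upwards [hδto.eventually_lt_const hδ₀, eventually_ge_atTop 2,
      hgto.eventually_le_const hε] with n h1 h2 h3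
    exact ⟨h1, h2, h3⟩
  obtain ⟨n, hBn, hn1, hn2, hgn⟩ := (hfreq.and_eventually hev).exists
  have hn0 : (0:ℝ) < n := by exact_mod_cast lt_of_lt_of_le two_pos hn2
  have hn1' : (1:ℝ) < n := by exact_mod_cast lt_of_lt_of_le one_lt_two hn2
  set δ : ℝ := (n:ℝ) ^ (-β) with hδ
  have hδ0 : 0 < δ := Real.rpow_pos_of_pos hn0 _
  have hδlt1 : δ < 1 := Real.rpow_lt_one_of_one_lt_of_neg hn1' (by linarith)
  set ρθ : ℝ := δ ^ θ with hρθ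
  have hρθ0 : 0 < ρθ := Real.rpow_pos_of_pos hδ0 _
  have hδρθ : δ ≤ ρθ := by
    have := Real.rpow_le_rpow_of_exponent_ge hδ0 hδlt1.le hθ1 (y := 1)
    simpa [Real.rpow_one] using this
  set r : ℝ := (n:ℝ) ^ (-p) with hr
  have hr0 : 0 < r := Real.rpow_pos_of_pos hn0 _
  obtain ⟨𝒱, hVcov, hVcard⟩ := grid_cover d (half_pos hρθ0) hr0
  -- the finite point set
  have hgf : ∀ i : ℕ, ∃ f : Finset (EuclideanSpace ℝ (Fin d)),
      (1 ≤ i → ((f : Set (EuclideanSpace ℝ (Fin d))) = E ∩ {x | ‖x‖ = (i:ℝ) ^ (-p)}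
        ∧ f.card = b i)) := by
    intro i
    by_cases h : 1 ≤ i
    · refine ⟨(hb i h).1.toFinset, fun _ => ⟨(hb i h).1.coe_toFinset, ?_⟩⟩
      have hnc := Set.ncard_eq_toFinset_card _ (hb i h).1
      rw [← hnc]; exact (hb i h).2
    · exact ⟨∅, fun h' => absurd h' h⟩
  choose gfin hgfin using hgf
  set Fb : Finset (EuclideanSpace ℝ (Fin d)) := (Finset.Icc 1 n).biUnion gfin with hFb
  have hFbcard : (Fb.card : ℝ) ≤ ∑ i ∈ Finset.Icc 1 n, (b i : ℝ) := by
    have h1 : Fb.card ≤ ∑ i ∈ Finset.Icc 1 n, (gfin i).card := Finset.card_biUnion_le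
    have h2 : ∀ i ∈ Finset.Icc 1 n, (gfin i).card = b i := by
      intro i hi
      rw [Finset.mem_Icc] at hi
      exact (hgfin i hi.1).2
    calc (Fb.card : ℝ) ≤ (∑ i ∈ Finset.Icc 1 n, (gfin i).card : ℕ) := by exact_mod_cast h1
    _ = ∑ i ∈ Finset.Icc 1 n, (b i : ℝ) := by
        push_cast
        exact Finset.sum_congr rfl (fun i hi => by exact_mod_cast h2 i hi)
  -- nontriviality
  haveI : Nontrivial (EuclideanSpace ℝ (Fin d)) := by
    refine nontrivial_of_ne (EuclideanSpace.single (⟨0, by omega⟩ : Fin d) (1:ℝ)) 0 ?_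
    intro hcon
    have := congrArg (fun v : EuclideanSpace ℝ (Fin d) => v (⟨0, by omega⟩ : Fin d)) hcon
    simp [EuclideanSpace.single_apply] at this
  -- the cover
  set 𝒰₁ : Set (Set (EuclideanSpace ℝ (Fin d))) :=
    (fun x => closedBall x (δ/2)) '' (Fb : Set (EuclideanSpace ℝ (Fin d))) with h𝒰₁
  set 𝒰₂ : Set (Set (EuclideanSpace ℝ (Fin d))) :=
    (fun c => closedBall c (ρθ/2)) '' (𝒱 : Set (EuclideanSpace ℝ (Fin d))) with h𝒰₂
  have hfin1 : 𝒰₁.Finite := Fb.finite_toSet.image _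
  have hfin2 : 𝒰₂.Finite := 𝒱.finite_toSet.image _
  refine ⟨δ, hδ0, hn1, 𝒰₁ ∪ 𝒰₂, (hfin1.union hfin2).countable, ?_, ?_, ?_⟩
  · -- coverage
    intro x hx
    obtain ⟨i, hi1, hnorm⟩ := hE hx
    rcases le_or_gt i n with hin | hin
    · -- x ∈ Fb
      have hxF : x ∈ Fb := by
        rw [hFb, Finset.mem_biUnion]
        refine ⟨i, Finset.mem_Icc.mpr ⟨hi1, hin⟩, ?_⟩
        rw [← Finset.mem_coe, (hgfin i hi1).1]
        exact ⟨hx, hnorm⟩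
      exact ⟨closedBall x (δ/2), Or.inl ⟨x, hxF, rfl⟩,
        mem_closedBall_self (by positivity)⟩
    · -- tail
      have hxr : x ∈ closedBall (0 : EuclideanSpace ℝ (Fin d)) r := by
        rw [mem_closedBall, dist_zero_right, hnorm, hr]
        exact Real.rpow_le_rpow_of_nonpos hn0 (by exact_mod_cast hin.le) (by linarith)
      obtain ⟨c, hc⟩ := Set.mem_iUnion.mp (hVcov hxr)
      obtain ⟨hcV, hxc⟩ := Set.mem_iUnion.mp hc
      exact ⟨closedBall c (ρθ/2), Or.inr ⟨c, hcV, rfl⟩, hxc⟩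
  · -- diameters
    rintro U (⟨x, _, rfl⟩ | ⟨c, _, rfl⟩)
    · rw [diam_cb' x (by positivity)]
      constructor
      · linarith
      · rw [← hρθ] at *; linarith
    · rw [diam_cb' c (by positivity)]
      constructor
      · linarith
      · rw [← hρθ]; linarith
  · -- the sum
    have hdiam1 : ∀ U ∈ 𝒰₁, ENNReal.ofReal (diam U ^ s) ≤ ENNReal.ofReal (δ ^ s) := by
      rintro U ⟨x, _, rfl⟩
      rw [diam_cb' x (by positivity), show 2*(δ/2) = δ by ring]
    have hdiam2 : ∀ U ∈ 𝒰₂, ENNReal.ofReal (diam U ^ s) ≤ ENNReal.ofReal (ρθ ^ s) := by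
      rintro U ⟨c, _, rfl⟩
      rw [diam_cb' c (by positivity), show 2*(ρθ/2) = ρθ by ring]
    have hsum1 : ∑' U : 𝒰₁, ENNReal.ofReal (diam (U : Set (EuclideanSpace ℝ (Fin d))) ^ s)
        ≤ (Fb.card : ENNReal) * ENNReal.ofReal (δ ^ s) := by
      refine le_trans (tsum_subtype_le_of_finite' hfin1 _ _ hdiam1) ?_
      apply mul_le_mul_left
      have h1 : 𝒰₁.ncard ≤ Fb.card := by
        have h2 := Set.ncard_image_le (f := fun x => closedBall x (δ/2))
          (s := (↑Fb : Set (EuclideanSpace ℝ (Fin d)))) Fb.finite_toSet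
        rw [Set.ncard_coe_finset] at h2
        rw [h𝒰₁]; exact h2
      exact_mod_cast h1
    have hsum2 : ∑' U : 𝒰₂, ENNReal.ofReal (diam (U : Set (EuclideanSpace ℝ (Fin d))) ^ s)
        ≤ (𝒱.card : ENNReal) * ENNReal.ofReal (ρθ ^ s) := by
      refine le_trans (tsum_subtype_le_of_finite' hfin2 _ _ hdiam2) ?_
      apply mul_le_mul_left
      have h1 : 𝒰₂.ncard ≤ 𝒱.card := by
        have h2 := Set.ncard_image_le (f := fun c => closedBall c (ρθ/2))
          (s := (↑𝒱 : Set (EuclideanSpace ℝ (Fin d)))) 𝒱.finite_toSet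
        rw [Set.ncard_coe_finset] at h2
        rw [h𝒰₂]; exact h2
      exact_mod_cast h1
    -- the real-number estimate
    have hreal : (Fb.card : ℝ) * δ ^ s + (𝒱.card : ℝ) * ρθ ^ s ≤ ε := by
      have hnne : (0:ℝ) ≤ (n:ℝ) := hn0.le
      have hδs : δ ^ s = (n:ℝ) ^ (-(β * s)) := by
        rw [hδ, ← Real.rpow_mul hnne, neg_mul]
      have hρθs : ρθ = (n:ℝ) ^ (-(β * θ)) := by
        rw [hρθ, hδ, ← Real.rpow_mul hnne, neg_mul]
      have hρθss : ρθ ^ s = (n:ℝ) ^ (-(β * θ * s)) := by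
        rw [hρθs, ← Real.rpow_mul hnne]
        congr 1; ring
      have hT1 : (Fb.card : ℝ) * δ ^ s ≤ (n:ℝ) ^ (-e1) := by
        have h1 : (Fb.card : ℝ) * δ ^ s ≤ (n:ℝ)^l * (n:ℝ)^(-(β*s)) := by
          rw [hδs]
          exact mul_le_mul_of_nonneg_right (hFbcard.trans hBn) (Real.rpow_nonneg hnne _)
        rw [← Real.rpow_add hn0] at h1
        have h2 : l + -(β*s) = -e1 := by rw [he1d]; ring
        rwa [h2] at h1
      rw [← hsd] at hVcard
      have hrρ : r / ρθ = (n:ℝ)^(β*θ-p) := by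
        rw [hr, hρθs, ← Real.rpow_sub hn0]
        congr 1; ring
      have hquot : 2*sd*r/(ρθ/2) + 5 = 4*sd*(n:ℝ)^(β*θ-p) + 5 := by
        rw [← hrρ]
        have h3 : 2*sd*r/(ρθ/2) = 4*sd*(r/ρθ) := by
          have hρθne : ρθ ≠ 0 := ne_of_gt hρθ0
          field_simp
          try ring
        rw [h3]
      have ha : (0:ℝ) ≤ 4 * sd * (n:ℝ)^(β*θ-p) := by
        have := Real.rpow_nonneg hnne (β*θ-p)
        have h0sd : 0 ≤ sd := by rw [hsd]; exact Real.sqrt_nonneg _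
        positivity
      have hT2 : (𝒱.card : ℝ) * ρθ ^ s ≤ A * (n:ℝ)^(-e2) + B * (n:ℝ)^(-(β*θ*s)) := by
        have h3 : (𝒱.card : ℝ) ≤ (4*sd*(n:ℝ)^(β*θ-p) + 5)^d := by
          rw [← hquot]; exact hVcard
        have h4 := pow_add_five_le d ha
        have h5 : (2*(4*sd*(n:ℝ)^(β*θ-p)))^d = A * ((n:ℝ)^(β*θ-p))^d := by
          rw [show 2*(4*sd*(n:ℝ)^(β*θ-p)) = (8*sd)*((n:ℝ)^(β*θ-p)) by ring, mul_pow, hA]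
        have h6 : ((n:ℝ)^(β*θ-p))^d = (n:ℝ)^((β*θ-p)*(d:ℝ)) := by
          rw [← Real.rpow_natCast ((n:ℝ)^(β*θ-p)) d, ← Real.rpow_mul hnne]
        have h7 : (β*θ-p)*(d:ℝ) + -(β*θ*s) = -e2 := by rw [he2d]; ring
        calc (𝒱.card : ℝ) * ρθ ^ s
            ≤ ((A * (n:ℝ)^((β*θ-p)*(d:ℝ))) + B) * (n:ℝ)^(-(β*θ*s)) := by
              rw [hρθss]
              refine mul_le_mul_of_nonneg_right ?_ (Real.rpow_nonneg hnne _)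
              calc (𝒱.card : ℝ) ≤ (4*sd*(n:ℝ)^(β*θ-p) + 5)^d := h3
              _ ≤ (2*(4*sd*(n:ℝ)^(β*θ-p)))^d + 10^d := h4
              _ = A * (n:ℝ)^((β*θ-p)*(d:ℝ)) + B := by rw [h5, h6, hB]
        _ = A * ((n:ℝ)^((β*θ-p)*(d:ℝ)) * (n:ℝ)^(-(β*θ*s))) + B * (n:ℝ)^(-(β*θ*s)) := by
              ring
        _ = A * (n:ℝ)^(-e2) + B * (n:ℝ)^(-(β*θ*s)) := by
              rw [← Real.rpow_add hn0, h7]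
      calc (Fb.card : ℝ) * δ ^ s + (𝒱.card : ℝ) * ρθ ^ s
          ≤ (n:ℝ)^(-e1) + (A * (n:ℝ)^(-e2) + B*(n:ℝ)^(-(β*θ*s))) := add_le_add hT1 hT2
      _ = g n := by rw [hg]; ring
      _ ≤ ε := hgn
    calc ∑' U : ↑(𝒰₁ ∪ 𝒰₂), ENNReal.ofReal (diam (U : Set (EuclideanSpace ℝ (Fin d))) ^ s)
        ≤ _ + _ := ENNReal.tsum_union_le
          (fun V => ENNReal.ofReal (diam V ^ s)) 𝒰₁ 𝒰₂
    _ ≤ (Fb.card : ENNReal) * ENNReal.ofReal (δ ^ s)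
        + (𝒱.card : ENNReal) * ENNReal.ofReal (ρθ ^ s) := add_le_add hsum1 hsum2
    _ = ENNReal.ofReal ((Fb.card : ℝ) * δ ^ s + (𝒱.card : ℝ) * ρθ ^ s) := by
        rw [ENNReal.ofReal_add (by positivity) (by positivity),
          ENNReal.ofReal_mul (by positivity), ENNReal.ofReal_mul (by positivity),
          ENNReal.ofReal_natCast, ENNReal.ofReal_natCast]
    _ ≤ ENNReal.ofReal ε := ENNReal.ofReal_le_ofReal hreal

end KeyNoHelpers
section Wrapper
open Real in
lemma freq_of_liminf (b : ℕ → ℕ) (l : ℝ)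
    (h : liminf (fun n : ℕ =>
        ((Real.log (∑ i ∈ Finset.Icc 1 n, (b i : ℝ)) / Real.log n : ℝ) : EReal)) atTop
      < (l : EReal)) :
    ∃ᶠ n : ℕ in atTop, (∑ i ∈ Finset.Icc 1 n, (b i : ℝ)) ≤ (n : ℝ) ^ l := by
  have hf := Filter.frequently_lt_of_liminf_lt (by isBoundedDefault) h
  refine (hf.and_eventually (eventually_ge_atTop 2)).mono ?_
  rintro n ⟨h1, h2⟩
  have hn1 : (1:ℝ) < n := by exact_mod_cast lt_of_lt_of_le one_lt_two h2
  have hlog : 0 < Real.log n := Real.log_pos hn1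
  set S : ℝ := ∑ i ∈ Finset.Icc 1 n, (b i : ℝ) with hS
  have hS0 : 0 ≤ S := Finset.sum_nonneg (fun i _ => by positivity)
  rcases eq_or_lt_of_le hS0 with he | hpos
  · rw [← he]; exact Real.rpow_nonneg (by linarith) _
  · have h3 : Real.log S / Real.log n < l := by exact_mod_cast h1
    have h4 : Real.log S < l * Real.log n := (div_lt_iff₀ hlog).mp h3
    calc S = Real.exp (Real.log S) := (Real.exp_log hpos).symm
    _ ≤ Real.exp (l * Real.log n) := Real.exp_le_exp.mpr h4.le
    _ = (n:ℝ) ^ l := by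
        rw [Real.rpow_def_of_pos (by linarith : (0:ℝ) < (n:ℝ)), mul_comm]

end Wrapper

theorem stmt14 (d : ℕ) (hd : 2 ≤ d) (p : ℝ) (hp : 0 < p)
    (E : Set (EuclideanSpace ℝ (Fin d))) (hE : E ⊆ concentric d p) (b : ℕ → ℕ)
    (hb : ∀ i : ℕ, 1 ≤ i → (E ∩ {x | ‖x‖ = (i : ℝ) ^ (-p)}).Finite ∧
      (E ∩ {x | ‖x‖ = (i : ℝ) ^ (-p)}).ncard = b i) :
    (∀ l : ℝ, 0 < l →
      liminf (fun n : ℕ =>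
          ((Real.log (∑ i ∈ Finset.Icc 1 n, (b i : ℝ)) / Real.log n : ℝ) : EReal)) atTop
        < (l : EReal) →
      ∀ θ : ℝ, 0 < θ → θ ≤ 1 → lodim θ E ≤ θ * l * d / (p * d + θ * l)) ∧
    (liminf (fun n : ℕ =>
        ((Real.log (∑ i ∈ Finset.Icc 1 n, (b i : ℝ)) / Real.log n : ℝ) : EReal)) atTop < ⊤ →
      Tendsto (fun θ : ℝ => lodim θ E) (nhdsWithin 0 (Set.Ioi 0)) (nhds 0)) := by
  have hd0 : (0:ℝ) < d := by exact_mod_cast lt_of_lt_of_le two_pos hd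
  have hbdd : ∀ θ : ℝ, BddBelow {s : ℝ | 0 ≤ s ∧ ∀ ε : ℝ, 0 < ε → ∀ δ₀ : ℝ, 0 < δ₀ →
      ∃ δ : ℝ, 0 < δ ∧ δ < δ₀ ∧
      ∃ 𝒰 : Set (Set (EuclideanSpace ℝ (Fin d))), 𝒰.Countable ∧ E ⊆ ⋃₀ 𝒰 ∧
        (∀ U ∈ 𝒰, δ ≤ diam U ∧ diam U ≤ δ ^ θ) ∧
        ∑' U : 𝒰, ENNReal.ofReal (diam (U : Set (EuclideanSpace ℝ (Fin d))) ^ s)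
          ≤ ENNReal.ofReal ε} := fun θ => ⟨0, fun x hx => hx.1⟩
  have hnonneg : ∀ θ : ℝ, 0 ≤ lodim θ E := by
    intro θ
    exact Real.sInf_nonneg (fun x hx => hx.1)
  have part1 : ∀ l : ℝ, 0 < l →
      liminf (fun n : ℕ =>
          ((Real.log (∑ i ∈ Finset.Icc 1 n, (b i : ℝ)) / Real.log n : ℝ) : EReal)) atTop
        < (l : EReal) →
      ∀ θ : ℝ, 0 < θ → θ ≤ 1 → lodim θ E ≤ θ * l * d / (p * d + θ * l) := by
    intro l hl hlim θ hθ0 hθ1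
    have hfreq := freq_of_liminf b l hlim
    set s₀ : ℝ := θ * l * d / (p * d + θ * l) with hs₀
    have hden : 0 < p * d + θ * l := by positivity
    have hs₀d : s₀ < d := by
      rw [hs₀, div_lt_iff₀ hden]
      nlinarith [mul_pos (mul_pos hp hd0) hd0]
    by_contra hcon
    push_neg at hcon
    set s : ℝ := min ((s₀ + lodim θ E)/2) ((s₀ + d)/2) with hs
    have h1 : s₀ < s := lt_min (by linarith) (by linarith)
    have h2 : s < d := lt_of_le_of_lt (min_le_right _ _) (by linarith)
    have h3 : s < lodim θ E := lt_of_le_of_lt (min_le_left _ _) (by linarith)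
    have hmem := key_lemma d hd p hp E hE b hb l hl hfreq θ hθ0 hθ1 s h1 h2
    have : lodim θ E ≤ s := csInf_le (hbdd θ) hmem
    linarith
  refine ⟨part1, ?_⟩
  intro hlim
  obtain ⟨c, hc1, hc2⟩ := exists_between hlim
  have hcbot : (⊥ : EReal) < c := lt_of_le_of_lt bot_le hc1
  set l : ℝ := max c.toReal 1 with hldef
  have hl : 0 < l := lt_of_lt_of_le one_pos (le_max_right _ _)
  have hcl : c ≤ (l : EReal) := by
    rw [← EReal.coe_toReal (ne_of_lt hc2) (ne_of_gt hcbot)]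
    exact_mod_cast le_max_left _ _
  have hliml := lt_of_lt_of_le hc1 hcl
  have hbound : ∀ θ : ℝ, 0 < θ → θ ≤ 1 → lodim θ E ≤ θ * (l * d / (p * d)) := by
    intro θ hθ0 hθ1
    refine (part1 l hl hliml θ hθ0 hθ1).trans ?_
    have h1 : θ * l * d / (p * d + θ * l) ≤ θ * l * d / (p * d) := by
      apply div_le_div_of_nonneg_left (by positivity) (by positivity)
      nlinarith
    calc θ * l * d / (p * d + θ * l) ≤ θ * l * d / (p * d) := h1
    _ = θ * (l * d / (p * d)) := by ring
  refine squeeze_zero' (g := fun θ : ℝ => θ * (l * d / (p * d)))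
    (Filter.Eventually.of_forall (fun θ => hnonneg θ)) ?_ ?_
  · have h01 : ∀ᶠ θ : ℝ in nhds (0:ℝ), θ < 1 :=
      tendsto_id.eventually_lt_const one_pos
    filter_upwards [self_mem_nhdsWithin, eventually_nhdsWithin_of_eventually_nhds h01]
      with θ hθ hθ1
    exact hbound θ hθ hθ1.le
  · have h2 : Tendsto (fun θ : ℝ => θ * (l * d / (p * d))) (nhds 0) (nhds 0) := by
      have := tendsto_id (α := ℝ) (x := nhds (0:ℝ)) |>.mul_const (l * (d:ℝ) / (p * d))
      simpa using this
    exact h2.mono_left (nhdsWithin_le_nhds (s := Set.Ioi (0:ℝ)))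
end
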